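/- arXiv:0706.3282 — 2 statements merged into one kernel-verified Lean document; each statement's English description precedes it below -/
import Mathlib

section
/- Let A and H be Lie bialgebras and R = R¹ ⊗ R² ∈ H ⊗ A (summation implicit; r = r¹ ⊗ r² denotes a second copy of R) a skew-copairing, i.e. R¹ ⊗ δ_A(R²) = [R¹, r¹] ⊗ r² ⊗ R² in H ⊗ A ⊗ A and δ_H(R¹) ⊗ R² = R¹ ⊗ r¹ ⊗ [R², r²] in H ⊗ H ⊗ A. Define φ : A → H ⊗ A by φ(a) = R¹ ⊗ [a, R²] and ψ : H → H ⊗ A by ψ(h) = [h, R¹] ⊗ R². Then (A, H, φ, ψ) is a matched pair of Lie coalgebras, A is a left H-comodule Lie algebra, H is a right A-comodule Lie algebra, condition (AA2): [h, a₍₋₁₎] ⊗ a₍₀₎ + h₍₀₎ ⊗ [h₍₁₎, a] = 0 holds, and consequently A ⊕ H with the direct sum Lie algebra structure and the cobracket δ_D(a) = δ_A(a) + φ(a) − τφ(a), δ_D(h) = δ_H(h) + ψ(h) − τψ(h) is a Lie bialgebra (denoted A ▶◀^R H). -/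
open TensorProduct

noncomputable section

variable {k : Type*} [Field k]
variable {A H : Type*} [AddCommGroup A] [Module k A] [AddCommGroup H] [Module k H]

/-- The cyclic rotation `ξ : u ⊗ v ⊗ w ↦ v ⊗ w ⊗ u` on `(L ⊗ L) ⊗ L`. -/
def ξmap (k L : Type*) [Field k] [AddCommGroup L] [Module k L] :
    ((L ⊗[k] L) ⊗[k] L) →ₗ[k] ((L ⊗[k] L) ⊗[k] L) :=
  (TensorProduct.comm k L (L ⊗[k] L)).toLinearMap ∘ₗ (TensorProduct.assoc k L L L).toLinearMap

/-- Swap the last two tensor factors: `(m ⊗ n) ⊗ p ↦ (m ⊗ p) ⊗ n`. -/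
def swapR (k M N P : Type*) [Field k] [AddCommGroup M] [Module k M] [AddCommGroup N]
    [Module k N] [AddCommGroup P] [Module k P] :
    ((M ⊗[k] N) ⊗[k] P) →ₗ[k] ((M ⊗[k] P) ⊗[k] N) :=
  (TensorProduct.assoc k M P N).symm.toLinearMap
    ∘ₗ TensorProduct.map LinearMap.id (TensorProduct.comm k N P).toLinearMap
    ∘ₗ (TensorProduct.assoc k M N P).toLinearMap

/-- A bilinear bracket is a Lie algebra structure: antisymmetry and the Jacobi identity. -/
def IsLieAlg {L : Type*} [AddCommGroup L] [Module k L] (br : L →ₗ[k] L →ₗ[k] L) : Prop :=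
  (∀ x y, br x y = - br y x) ∧
  (∀ x y z, br (br x y) z + br (br y z) x + br (br z x) y = 0)

/-- A cobracket is a Lie coalgebra structure: coanticommutativity `τ ∘ δ = −δ` and the
co-Jacobi identity `(id + ξ + ξ²) ∘ (δ ⊗ id) ∘ δ = 0`. -/
def IsLieCoalg {L : Type*} [AddCommGroup L] [Module k L] (δ : L →ₗ[k] L ⊗[k] L) : Prop :=
  (∀ x, TensorProduct.comm k L L (δ x) = - δ x) ∧
  (∀ x, TensorProduct.map δ LinearMap.id (δ x)
      + ξmap k L (TensorProduct.map δ LinearMap.id (δ x))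
      + ξmap k L (ξmap k L (TensorProduct.map δ LinearMap.id (δ x))) = 0)

/-- A Lie bialgebra: simultaneously a Lie algebra and a Lie coalgebra satisfying (LB):
`δ[x,y] = [x,y₁]⊗y₂ + y₁⊗[x,y₂] + x₁⊗[x₂,y] + [x₁,y]⊗x₂` (Sweedler notation). -/
def IsLieBialg {L : Type*} [AddCommGroup L] [Module k L]
    (br : L →ₗ[k] L →ₗ[k] L) (δ : L →ₗ[k] L ⊗[k] L) : Prop :=
  IsLieAlg br ∧ IsLieCoalg δ ∧
  ∀ x y, δ (br x y)
      = TensorProduct.map (br x) LinearMap.id (δ y)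
      + TensorProduct.map LinearMap.id (br x) (δ y)
      + TensorProduct.map LinearMap.id (br.flip y) (δ x)
      + TensorProduct.map (br.flip y) LinearMap.id (δ x)

/-- The bracket on the direct sum `A ⊕ H`:
`[(a,h),(b,g)] = ([a,b] + h▷b − g▷a + σ(h,g), [h,g] + h◁b − g◁a + θ(a,b))`. -/
def bbBracket (brA : A →ₗ[k] A →ₗ[k] A) (brH : H →ₗ[k] H →ₗ[k] H)
    (r : H →ₗ[k] A →ₗ[k] A) (l : H →ₗ[k] A →ₗ[k] H)
    (σ : H →ₗ[k] H →ₗ[k] A) (θ : A →ₗ[k] A →ₗ[k] H) :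
    (A × H) →ₗ[k] (A × H) →ₗ[k] (A × H) :=
  LinearMap.mk₂ k
    (fun x y => (brA x.1 y.1 + r x.2 y.1 - r y.2 x.1 + σ x.2 y.2,
                 brH x.2 y.2 + l x.2 y.1 - l y.2 x.1 + θ x.1 y.1))
    (fun x x' y => by
      simp only [Prod.fst_add, Prod.snd_add, map_add, LinearMap.add_apply, Prod.mk_add_mk,
        Prod.mk.injEq]
      all_goals try (constructor <;> abel))
    (fun c x y => by
      simp only [Prod.smul_fst, Prod.smul_snd, map_smul, LinearMap.smul_apply, Prod.smul_mk,
        Prod.mk.injEq, smul_add, smul_sub]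
      all_goals try (constructor <;> abel))
    (fun x y y' => by
      simp only [Prod.fst_add, Prod.snd_add, map_add, LinearMap.add_apply, Prod.mk_add_mk,
        Prod.mk.injEq]
      all_goals try (constructor <;> abel))
    (fun c x y => by
      simp only [Prod.smul_fst, Prod.smul_snd, map_smul, LinearMap.smul_apply, Prod.smul_mk,
        Prod.mk.injEq, smul_add, smul_sub]
      all_goals try (constructor <;> abel))

/-- The cobracket on the direct sum `A ⊕ H`:
`δ_D(a) = δ_A(a) + φ(a) − τφ(a) + P(a)` and `δ_D(h) = δ_H(h) + ψ(h) − τψ(h) + Q(h)`,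
all terms viewed inside `(A ⊕ H) ⊗ (A ⊕ H)`. -/
def bbCobracket (δA : A →ₗ[k] A ⊗[k] A) (δH : H →ₗ[k] H ⊗[k] H)
    (φ : A →ₗ[k] H ⊗[k] A) (ψ : H →ₗ[k] H ⊗[k] A)
    (P : A →ₗ[k] H ⊗[k] H) (Q : H →ₗ[k] A ⊗[k] A) :
    (A × H) →ₗ[k] (A × H) ⊗[k] (A × H) :=
  (TensorProduct.map (LinearMap.inl k A H) (LinearMap.inl k A H) ∘ₗ δA
    + TensorProduct.map (LinearMap.inr k A H) (LinearMap.inl k A H) ∘ₗ φ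
    - TensorProduct.map (LinearMap.inl k A H) (LinearMap.inr k A H)
        ∘ₗ (TensorProduct.comm k H A).toLinearMap ∘ₗ φ
    + TensorProduct.map (LinearMap.inr k A H) (LinearMap.inr k A H) ∘ₗ P) ∘ₗ LinearMap.fst k A H
  + (TensorProduct.map (LinearMap.inr k A H) (LinearMap.inr k A H) ∘ₗ δH
    + TensorProduct.map (LinearMap.inr k A H) (LinearMap.inl k A H) ∘ₗ ψ
    - TensorProduct.map (LinearMap.inl k A H) (LinearMap.inr k A H)
        ∘ₗ (TensorProduct.comm k H A).toLinearMap ∘ₗ ψ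
    + TensorProduct.map (LinearMap.inl k A H) (LinearMap.inl k A H) ∘ₗ Q) ∘ₗ LinearMap.snd k A H

/-- The left coaction `φ(a) := R¹ ⊗ [a, R²]` defined from a copairing `R ∈ H ⊗ A`. -/
def copairPhi (brA : A →ₗ[k] A →ₗ[k] A) (R : H ⊗[k] A) : A →ₗ[k] H ⊗[k] A where
  toFun a := TensorProduct.map LinearMap.id (brA a) R
  map_add' a b := by simp [map_add, TensorProduct.map_add_right]
  map_smul' c a := by simp [map_smul, TensorProduct.map_smul_right]

/-- The right coaction `ψ(h) := [h, R¹] ⊗ R²` defined from a copairing `R ∈ H ⊗ A`. -/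
def copairPsi (brH : H →ₗ[k] H →ₗ[k] H) (R : H ⊗[k] A) : H →ₗ[k] H ⊗[k] A where
  toFun h := TensorProduct.map (brH h) LinearMap.id R
  map_add' h g := by simp [map_add, TensorProduct.map_add_left]
  map_smul' c h := by simp [map_smul, TensorProduct.map_smul_left]


section Toolkit

variable {M N P Q M' N' P' : Type*}
  [AddCommGroup M] [Module k M] [AddCommGroup N] [Module k N]
  [AddCommGroup P] [Module k P] [AddCommGroup Q] [Module k Q]
  [AddCommGroup M'] [Module k M'] [AddCommGroup N'] [Module k N']
  [AddCommGroup P'] [Module k P']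

/-- generic rotation `(x⊗y)⊗z ↦ (y⊗z)⊗x`. -/
def rot3 (k M N P : Type*) [Field k] [AddCommGroup M] [Module k M] [AddCommGroup N]
    [Module k N] [AddCommGroup P] [Module k P] :
    ((M ⊗[k] N) ⊗[k] P) →ₗ[k] ((N ⊗[k] P) ⊗[k] M) :=
  (TensorProduct.comm k M (N ⊗[k] P)).toLinearMap ∘ₗ (TensorProduct.assoc k M N P).toLinearMap

@[simp] lemma rot3_tmul (x : M) (y : N) (z : P) :
    rot3 k M N P ((x ⊗ₜ[k] y) ⊗ₜ[k] z) = (y ⊗ₜ[k] z) ⊗ₜ[k] x := by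
  simp [rot3]

lemma ξmap_eq_rot3 {L : Type*} [AddCommGroup L] [Module k L] :
    ξmap k L = rot3 k L L L := rfl

@[simp] lemma swapR_tmul (x : M) (y : N) (z : P) :
    swapR k M N P ((x ⊗ₜ[k] y) ⊗ₜ[k] z) = (x ⊗ₜ[k] z) ⊗ₜ[k] y := by
  simp [swapR]

lemma map_map (f : M →ₗ[k] M') (g : N →ₗ[k] N') (f' : P →ₗ[k] M) (g' : Q →ₗ[k] N)
    (x : P ⊗[k] Q) :
    TensorProduct.map f g (TensorProduct.map f' g' x)
      = TensorProduct.map (f ∘ₗ f') (g ∘ₗ g') x := by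
  rw [TensorProduct.map_comp]; rfl

lemma mapswap (f : M →ₗ[k] M') (g : N →ₗ[k] N') (x : M ⊗[k] N) :
    TensorProduct.map f LinearMap.id (TensorProduct.map LinearMap.id g x)
      = TensorProduct.map LinearMap.id g (TensorProduct.map f LinearMap.id x) := by
  rw [_root_.map_map, _root_.map_map]; simp

lemma comm_natural (f : M →ₗ[k] M') (g : N →ₗ[k] N') (x : M ⊗[k] N) :
    TensorProduct.comm k M' N' (TensorProduct.map f g x)
      = TensorProduct.map g f (TensorProduct.comm k M N x) := by
  induction x using TensorProduct.induction_on with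
  | zero => simp
  | tmul m n => simp
  | add u v hu hv => simp [map_add, hu, hv]

lemma map_id_comp_apply (g₂ : N' →ₗ[k] P') (g₁ : N →ₗ[k] N') (x : M ⊗[k] N) :
    TensorProduct.map LinearMap.id (g₂ ∘ₗ g₁) x
      = TensorProduct.map LinearMap.id g₂ (TensorProduct.map LinearMap.id g₁ x) := by
  conv_rhs => rw [_root_.map_map]
  rw [LinearMap.id_comp]

lemma map_comp_id_apply (f₂ : M' →ₗ[k] P) (f₁ : M →ₗ[k] M') (x : M ⊗[k] N) :
    TensorProduct.map (f₂ ∘ₗ f₁) LinearMap.id x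
      = TensorProduct.map f₂ LinearMap.id (TensorProduct.map f₁ LinearMap.id x) := by
  conv_rhs => rw [_root_.map_map]
  rw [LinearMap.id_comp]

end Toolkit

section Aux

lemma lieD1 {L : Type*} [AddCommGroup L] [Module k L] {br : L →ₗ[k] L →ₗ[k] L}
    (hbr : IsLieAlg br) (a x y : L) :
    br a (br x y) = br (br a x) y - br (br a y) x := by
  have j := hbr.2 x y a
  have h1 : br a (br x y) = - br (br x y) a := by rw [hbr.1]
  have h2 : br (br y a) x = - br (br a y) x := by rw [hbr.1 y a]; simp
  rw [h2] at j
  rw [h1, ← sub_eq_zero]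
  rw [show -br (br x y) a - (br (br a x) y - br (br a y) x)
      = -(br (br x y) a + -br (br a y) x + br (br a x) y) from by abel, j, neg_zero]

lemma lieD2 {L : Type*} [AddCommGroup L] [Module k L] {br : L →ₗ[k] L →ₗ[k] L}
    (hbr : IsLieAlg br) (a b x : L) :
    br (br a b) x = br (br a x) b + br a (br b x) := by
  have h1 : br (br a b) x = - br x (br a b) := hbr.1 _ _
  rw [h1, lieD1 hbr x a b, neg_sub]
  have h2 : br (br x b) a = - br a (br x b) := hbr.1 _ _
  have h3 : br (br x a) b = - br (br a x) b := by rw [hbr.1 x a]; simp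
  rw [h2, h3, hbr.1 x b]
  simp
  abel

variable {brA : A →ₗ[k] A →ₗ[k] A} {δA : A →ₗ[k] A ⊗[k] A}
variable {brH : H →ₗ[k] H →ₗ[k] H} {δH : H →ₗ[k] H ⊗[k] H}
variable {R : H ⊗[k] A}

@[simp] lemma copairPhi_apply (a : A) :
    copairPhi brA R a = TensorProduct.map LinearMap.id (brA a) R := rfl

@[simp] lemma copairPsi_apply (h : H) :
    copairPsi brH R h = TensorProduct.map (brH h) LinearMap.id R := rfl

lemma copairPhi_add (u v : H ⊗[k] A) :
    copairPhi brA (u + v) = copairPhi brA u + copairPhi brA v := by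
  ext x; simp [map_add]

@[simp] lemma copairPhi_zero : copairPhi brA (0 : H ⊗[k] A) = 0 := by
  ext x; simp

lemma copairPsi_add (u v : H ⊗[k] A) :
    copairPsi brH (u + v) = copairPsi brH u + copairPsi brH v := by
  ext x; simp [map_add]

@[simp] lemma copairPsi_zero : copairPsi brH (0 : H ⊗[k] A) = 0 := by
  ext x; simp

end Aux

section Conj

variable {brA : A →ₗ[k] A →ₗ[k] A} {δA : A →ₗ[k] A ⊗[k] A}
variable {brH : H →ₗ[k] H →ₗ[k] H} {δH : H →ₗ[k] H ⊗[k] H}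
variable {R : H ⊗[k] A}

lemma conj1 (hA : IsLieAlg brA)
    (hR2 : TensorProduct.map δH LinearMap.id R
        = TensorProduct.map LinearMap.id (TensorProduct.lift brA)
            (TensorProduct.tensorTensorTensorComm k H A H A (R ⊗ₜ[k] R)))
    (a : A) :
    TensorProduct.map δH LinearMap.id (copairPhi brA R a)
      = (TensorProduct.assoc k H H A).symm
          (TensorProduct.map LinearMap.id (copairPhi brA R) (copairPhi brA R a))
      - TensorProduct.map (TensorProduct.comm k H H).toLinearMap LinearMap.id
          ((TensorProduct.assoc k H H A).symm
            (TensorProduct.map LinearMap.id (copairPhi brA R) (copairPhi brA R a))) := by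
  have key : ∀ u v : H ⊗[k] A,
      TensorProduct.map LinearMap.id (brA a)
        (TensorProduct.map LinearMap.id (TensorProduct.lift brA)
          (TensorProduct.tensorTensorTensorComm k H A H A (u ⊗ₜ[k] v)))
      = (TensorProduct.assoc k H H A).symm
          (TensorProduct.map LinearMap.id (copairPhi brA v)
            (TensorProduct.map LinearMap.id (brA a) u))
      - TensorProduct.map (TensorProduct.comm k H H).toLinearMap LinearMap.id
          ((TensorProduct.assoc k H H A).symm
            (TensorProduct.map LinearMap.id (copairPhi brA u)
              (TensorProduct.map LinearMap.id (brA a) v))) := by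
    intro u v
    induction u using TensorProduct.induction_on with
    | zero => simp
    | add u₁ u₂ h₁ h₂ =>
        simp only [TensorProduct.add_tmul, map_add, copairPhi_add, TensorProduct.map_add_right,
          LinearMap.add_apply, h₁, h₂]
        abel
    | tmul p x =>
      induction v using TensorProduct.induction_on with
      | zero => simp
      | add v₁ v₂ h₁ h₂ =>
          simp only [TensorProduct.tmul_add, map_add, copairPhi_add, TensorProduct.map_add_right,
            LinearMap.add_apply, h₁, h₂]
          abel
      | tmul q y =>
          simp only [TensorProduct.tensorTensorTensorComm_tmul, TensorProduct.map_tmul,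
            LinearMap.id_coe, id_eq, TensorProduct.lift.tmul, copairPhi_apply,
            TensorProduct.assoc_symm_tmul, LinearEquiv.coe_coe, TensorProduct.comm_tmul]
          rw [lieD1 hA, TensorProduct.tmul_sub]
  have e := key R R
  rw [copairPhi_apply, mapswap, hR2]
  exact e

end Conj

lemma conj2 {brH : H →ₗ[k] H →ₗ[k] H} {δA : A →ₗ[k] A ⊗[k] A} {R : H ⊗[k] A}
    (hH : IsLieAlg brH)
    (hR1 : TensorProduct.map LinearMap.id δA R
        = TensorProduct.map (TensorProduct.lift brH) (TensorProduct.comm k A A).toLinearMap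
            (TensorProduct.tensorTensorTensorComm k H A H A (R ⊗ₜ[k] R)))
    (h : H) :
    TensorProduct.map LinearMap.id δA (copairPsi brH R h)
      = TensorProduct.assoc k H A A
          (TensorProduct.map (copairPsi brH R) LinearMap.id (copairPsi brH R h))
      - TensorProduct.map LinearMap.id (TensorProduct.comm k A A).toLinearMap
          (TensorProduct.assoc k H A A
            (TensorProduct.map (copairPsi brH R) LinearMap.id (copairPsi brH R h))) := by
  have key : ∀ u v : H ⊗[k] A,
      TensorProduct.map (brH h) LinearMap.id
        (TensorProduct.map (TensorProduct.lift brH) (TensorProduct.comm k A A).toLinearMap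
          (TensorProduct.tensorTensorTensorComm k H A H A (u ⊗ₜ[k] v)))
      = TensorProduct.assoc k H A A
          (TensorProduct.map (copairPsi brH v) LinearMap.id
            (TensorProduct.map (brH h) LinearMap.id u))
      - TensorProduct.map LinearMap.id (TensorProduct.comm k A A).toLinearMap
          (TensorProduct.assoc k H A A
            (TensorProduct.map (copairPsi brH u) LinearMap.id
              (TensorProduct.map (brH h) LinearMap.id v))) := by
    intro u v
    induction u using TensorProduct.induction_on with
    | zero => simp
    | add u₁ u₂ h₁ h₂ =>
        simp only [TensorProduct.add_tmul, map_add, copairPsi_add, TensorProduct.map_add_left,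
          LinearMap.add_apply, h₁, h₂]
        abel
    | tmul p x =>
      induction v using TensorProduct.induction_on with
      | zero => simp
      | add v₁ v₂ h₁ h₂ =>
          simp only [TensorProduct.tmul_add, map_add, copairPsi_add, TensorProduct.map_add_left,
            LinearMap.add_apply, h₁, h₂]
          abel
      | tmul q y =>
          simp only [TensorProduct.tensorTensorTensorComm_tmul, TensorProduct.map_tmul,
            LinearMap.id_coe, id_eq, TensorProduct.lift.tmul, copairPsi_apply,
            TensorProduct.assoc_tmul, LinearEquiv.coe_coe, TensorProduct.comm_tmul]
          rw [lieD1 hH, TensorProduct.sub_tmul]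
  have e := key R R
  rw [copairPsi_apply, ← mapswap, hR1]
  exact e

lemma conj5 {brA : A →ₗ[k] A →ₗ[k] A} {R : H ⊗[k] A} (hA : IsLieAlg brA) (a b : A) :
    copairPhi brA R (brA a b)
      = TensorProduct.map LinearMap.id (brA.flip b) (copairPhi brA R a)
      + TensorProduct.map LinearMap.id (brA a) (copairPhi brA R b) := by
  simp only [copairPhi_apply]
  induction R using TensorProduct.induction_on with
  | zero => simp
  | add u v hu hv => simp only [map_add, hu, hv]; abel
  | tmul p x =>
      simp only [TensorProduct.map_tmul, LinearMap.id_coe, id_eq, LinearMap.flip_apply]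
      rw [lieD2 hA, TensorProduct.tmul_add]

lemma conj6 {brH : H →ₗ[k] H →ₗ[k] H} {R : H ⊗[k] A} (hH : IsLieAlg brH) (h g : H) :
    copairPsi brH R (brH h g)
      = TensorProduct.map (brH h) LinearMap.id (copairPsi brH R g)
      + TensorProduct.map (brH.flip g) LinearMap.id (copairPsi brH R h) := by
  simp only [copairPsi_apply]
  induction R using TensorProduct.induction_on with
  | zero => simp
  | add u v hu hv => simp only [map_add, hu, hv]; abel
  | tmul p x =>
      simp only [TensorProduct.map_tmul, LinearMap.id_coe, id_eq, LinearMap.flip_apply]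
      rw [lieD2 hH, TensorProduct.add_tmul]; abel

lemma conj7 {brA : A →ₗ[k] A →ₗ[k] A} {brH : H →ₗ[k] H →ₗ[k] H} {R : H ⊗[k] A}
    (hA : IsLieAlg brA) (h : H) (a : A) :
    TensorProduct.map (brH h) LinearMap.id (copairPhi brA R a)
      + TensorProduct.map LinearMap.id (brA.flip a) (copairPsi brH R h) = 0 := by
  simp only [copairPhi_apply, copairPsi_apply]
  induction R using TensorProduct.induction_on with
  | zero => simp
  | add u v hu hv =>
      simp only [map_add] at hu hv ⊢
      rw [show ∀ x y z w : H ⊗[k] A, x + y + (z + w) = (x + z) + (y + w) from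
        fun _ _ _ _ => by abel, hu, hv, add_zero]
  | tmul p x =>
      simp only [_root_.map_map, TensorProduct.map_tmul, LinearMap.id_coe, id_eq,
        LinearMap.coe_comp, Function.comp_apply, LinearMap.flip_apply]
      rw [hA.1 x a, TensorProduct.tmul_neg]
      abel

section BB34

variable {brA : A →ₗ[k] A →ₗ[k] A} {δA : A →ₗ[k] A ⊗[k] A}
variable {brH : H →ₗ[k] H →ₗ[k] H} {δH : H →ₗ[k] H ⊗[k] H}
variable {R : H ⊗[k] A}

lemma sublA1 (brA : A →ₗ[k] A →ₗ[k] A) (p : H) (x : A) (w : A ⊗[k] A) :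
    (TensorProduct.assoc k H A A).symm
        (p ⊗ₜ[k] (TensorProduct.map LinearMap.id (brA.flip x) w))
      = TensorProduct.map (TensorProduct.comm k A H).toLinearMap LinearMap.id
          ((TensorProduct.assoc k A H A).symm
            (TensorProduct.map LinearMap.id (copairPhi brA (p ⊗ₜ[k] x)) w)) := by
  induction w using TensorProduct.induction_on with
  | zero => simp
  | add u v hu hv => simp only [map_add, TensorProduct.tmul_add, hu, hv]
  | tmul a₁ a₂ => simp

lemma sublA2 (brA : A →ₗ[k] A →ₗ[k] A) (p : H) (x : A) (w : A ⊗[k] A) :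
    (TensorProduct.assoc k H A A).symm
        (p ⊗ₜ[k] (TensorProduct.map (brA.flip x) LinearMap.id w))
      = TensorProduct.map (copairPhi brA (p ⊗ₜ[k] x)) LinearMap.id w := by
  induction w using TensorProduct.induction_on with
  | zero => simp
  | add u v hu hv => simp only [map_add, TensorProduct.tmul_add, hu, hv]
  | tmul a₁ a₂ => simp

lemma splitA (hLB : ∀ x y, δA (brA x y)
      = TensorProduct.map (brA x) LinearMap.id (δA y)
      + TensorProduct.map LinearMap.id (brA x) (δA y)
      + TensorProduct.map LinearMap.id (brA.flip y) (δA x)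
      + TensorProduct.map (brA.flip y) LinearMap.id (δA x)) (a : A) (u : H ⊗[k] A) :
    (TensorProduct.assoc k H A A).symm
        (TensorProduct.map LinearMap.id (δA ∘ₗ brA a) u)
      = (TensorProduct.assoc k H A A).symm
          (TensorProduct.map LinearMap.id (TensorProduct.map (brA a) LinearMap.id ∘ₗ δA) u)
      + (TensorProduct.assoc k H A A).symm
          (TensorProduct.map LinearMap.id (TensorProduct.map LinearMap.id (brA a) ∘ₗ δA) u)
      + TensorProduct.map (TensorProduct.comm k A H).toLinearMap LinearMap.id
          ((TensorProduct.assoc k A H A).symm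
            (TensorProduct.map LinearMap.id (copairPhi brA u) (δA a)))
      + TensorProduct.map (copairPhi brA u) LinearMap.id (δA a) := by
  induction u using TensorProduct.induction_on with
  | zero => simp
  | add u v hu hv =>
      simp only [map_add, copairPhi_add, TensorProduct.map_add_left,
        TensorProduct.map_add_right, LinearMap.add_apply]
      linear_combination (norm := abel) hu + hv
  | tmul p x =>
      have e1 := sublA1 brA p x (δA a)
      have e2 := sublA2 brA p x (δA a)
      simp only [TensorProduct.map_tmul, LinearMap.id_coe, id_eq, LinearMap.coe_comp,
        Function.comp_apply]
      rw [hLB a x]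
      simp only [TensorProduct.tmul_add, map_add]
      rw [e1, e2]

lemma conj3 (hAlie : IsLieAlg brA) (hHlie : IsLieAlg brH)
    (hLB : ∀ x y, δA (brA x y)
      = TensorProduct.map (brA x) LinearMap.id (δA y)
      + TensorProduct.map LinearMap.id (brA x) (δA y)
      + TensorProduct.map LinearMap.id (brA.flip y) (δA x)
      + TensorProduct.map (brA.flip y) LinearMap.id (δA x))
    (hR1 : TensorProduct.map LinearMap.id δA R
        = TensorProduct.map (TensorProduct.lift brH) (TensorProduct.comm k A A).toLinearMap
            (TensorProduct.tensorTensorTensorComm k H A H A (R ⊗ₜ[k] R)))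
    (a : A) :
    (TensorProduct.assoc k H A A).symm
        (TensorProduct.map LinearMap.id δA (copairPhi brA R a))
      = TensorProduct.map (copairPhi brA R) LinearMap.id (δA a)
      + TensorProduct.map (TensorProduct.comm k A H).toLinearMap LinearMap.id
          ((TensorProduct.assoc k A H A).symm
            (TensorProduct.map LinearMap.id (copairPhi brA R) (δA a)))
      + TensorProduct.map (copairPsi brH R) LinearMap.id (copairPhi brA R a)
      - swapR k H A A (TensorProduct.map (copairPsi brH R) LinearMap.id (copairPhi brA R a)) := by
  have key : ∀ u v : H ⊗[k] A,
      (TensorProduct.assoc k H A A).symm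
          (TensorProduct.map LinearMap.id (TensorProduct.map (brA a) LinearMap.id)
            (TensorProduct.map (TensorProduct.lift brH) (TensorProduct.comm k A A).toLinearMap
              (TensorProduct.tensorTensorTensorComm k H A H A (u ⊗ₜ[k] v))))
      + (TensorProduct.assoc k H A A).symm
          (TensorProduct.map LinearMap.id (TensorProduct.map LinearMap.id (brA a))
            (TensorProduct.map (TensorProduct.lift brH) (TensorProduct.comm k A A).toLinearMap
              (TensorProduct.tensorTensorTensorComm k H A H A (u ⊗ₜ[k] v))))
      = TensorProduct.map (copairPsi brH v) LinearMap.id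
          (TensorProduct.map LinearMap.id (brA a) u)
      - swapR k H A A (TensorProduct.map (copairPsi brH u) LinearMap.id
          (TensorProduct.map LinearMap.id (brA a) v)) := by
    intro u v
    induction u using TensorProduct.induction_on with
    | zero => simp
    | add u₁ u₂ h₁ h₂ =>
        simp only [TensorProduct.add_tmul, map_add, copairPsi_add, TensorProduct.map_add_left,
          TensorProduct.map_add_right, LinearMap.add_apply]
        linear_combination (norm := abel) h₁ + h₂
    | tmul p x =>
      induction v using TensorProduct.induction_on with
      | zero => simp
      | add v₁ v₂ h₁ h₂ =>
          simp only [TensorProduct.tmul_add, map_add, copairPsi_add, TensorProduct.map_add_left,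
            TensorProduct.map_add_right, LinearMap.add_apply]
          linear_combination (norm := abel) h₁ + h₂
      | tmul q y =>
          simp only [TensorProduct.tensorTensorTensorComm_tmul, TensorProduct.map_tmul,
            LinearMap.id_coe, id_eq, TensorProduct.lift.tmul, copairPsi_apply,
            TensorProduct.assoc_symm_tmul, LinearEquiv.coe_coe, TensorProduct.comm_tmul,
            swapR_tmul]
          rw [hHlie.1 q p, TensorProduct.neg_tmul, TensorProduct.neg_tmul, sub_neg_eq_add]
          abel
  have hsplit := splitA hLB a R
  have e := key R R
  simp only [copairPhi_apply, copairPsi_apply] at e ⊢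
  rw [_root_.map_map, LinearMap.id_comp]
  rw [hsplit, map_id_comp_apply, map_id_comp_apply, hR1]
  linear_combination (norm := abel) e

end BB34

section BB4

variable {brA : A →ₗ[k] A →ₗ[k] A} {δA : A →ₗ[k] A ⊗[k] A}
variable {brH : H →ₗ[k] H →ₗ[k] H} {δH : H →ₗ[k] H ⊗[k] H}
variable {R : H ⊗[k] A}

lemma sublH1 (brH : H →ₗ[k] H →ₗ[k] H) (p : H) (x : A) (w : H ⊗[k] H) :
    (TensorProduct.map LinearMap.id (brH.flip p) w) ⊗ₜ[k] x
      = (TensorProduct.assoc k H H A).symm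
          (TensorProduct.map LinearMap.id (copairPsi brH (p ⊗ₜ[k] x)) w) := by
  induction w using TensorProduct.induction_on with
  | zero => simp
  | add u v hu hv => simp only [map_add, TensorProduct.add_tmul, hu, hv]
  | tmul h₁ h₂ => simp

lemma sublH2 (brH : H →ₗ[k] H →ₗ[k] H) (p : H) (x : A) (w : H ⊗[k] H) :
    (TensorProduct.map (brH.flip p) LinearMap.id w) ⊗ₜ[k] x
      = swapR k H A H (TensorProduct.map (copairPsi brH (p ⊗ₜ[k] x)) LinearMap.id w) := by
  induction w using TensorProduct.induction_on with
  | zero => simp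
  | add u v hu hv => simp only [map_add, TensorProduct.add_tmul, hu, hv]
  | tmul h₁ h₂ => simp

lemma splitH (hLBH : ∀ x y, δH (brH x y)
      = TensorProduct.map (brH x) LinearMap.id (δH y)
      + TensorProduct.map LinearMap.id (brH x) (δH y)
      + TensorProduct.map LinearMap.id (brH.flip y) (δH x)
      + TensorProduct.map (brH.flip y) LinearMap.id (δH x)) (h : H) (u : H ⊗[k] A) :
    TensorProduct.map (δH ∘ₗ brH h) LinearMap.id u
      = TensorProduct.map (TensorProduct.map (brH h) LinearMap.id ∘ₗ δH) LinearMap.id u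
      + TensorProduct.map (TensorProduct.map LinearMap.id (brH h) ∘ₗ δH) LinearMap.id u
      + (TensorProduct.assoc k H H A).symm
          (TensorProduct.map LinearMap.id (copairPsi brH u) (δH h))
      + swapR k H A H (TensorProduct.map (copairPsi brH u) LinearMap.id (δH h)) := by
  induction u using TensorProduct.induction_on with
  | zero => simp
  | add u v hu hv =>
      simp only [map_add, copairPsi_add, TensorProduct.map_add_left,
        TensorProduct.map_add_right, LinearMap.add_apply]
      linear_combination (norm := abel) hu + hv
  | tmul p x =>
      have e1 := sublH1 brH p x (δH h)
      have e2 := sublH2 brH p x (δH h)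
      simp only [TensorProduct.map_tmul, LinearMap.id_coe, id_eq, LinearMap.coe_comp,
        Function.comp_apply]
      rw [hLBH h p]
      simp only [TensorProduct.add_tmul]
      rw [e1, e2]

lemma conj4 (hAlie : IsLieAlg brA)
    (hLBH : ∀ x y, δH (brH x y)
      = TensorProduct.map (brH x) LinearMap.id (δH y)
      + TensorProduct.map LinearMap.id (brH x) (δH y)
      + TensorProduct.map LinearMap.id (brH.flip y) (δH x)
      + TensorProduct.map (brH.flip y) LinearMap.id (δH x))
    (hR2 : TensorProduct.map δH LinearMap.id R
        = TensorProduct.map LinearMap.id (TensorProduct.lift brA)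
            (TensorProduct.tensorTensorTensorComm k H A H A (R ⊗ₜ[k] R)))
    (h : H) :
    TensorProduct.map δH LinearMap.id (copairPsi brH R h)
      = (TensorProduct.assoc k H H A).symm
          (TensorProduct.map LinearMap.id (copairPsi brH R) (δH h))
      + swapR k H A H (TensorProduct.map (copairPsi brH R) LinearMap.id (δH h))
      + (TensorProduct.assoc k H H A).symm
          (TensorProduct.map LinearMap.id (copairPhi brA R) (copairPsi brH R h))
      - TensorProduct.map (TensorProduct.comm k H H).toLinearMap LinearMap.id
          ((TensorProduct.assoc k H H A).symm
            (TensorProduct.map LinearMap.id (copairPhi brA R) (copairPsi brH R h))) := by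
  have key : ∀ u v : H ⊗[k] A,
      TensorProduct.map (TensorProduct.map (brH h) LinearMap.id) LinearMap.id
          (TensorProduct.map LinearMap.id (TensorProduct.lift brA)
            (TensorProduct.tensorTensorTensorComm k H A H A (u ⊗ₜ[k] v)))
      + TensorProduct.map (TensorProduct.map LinearMap.id (brH h)) LinearMap.id
          (TensorProduct.map LinearMap.id (TensorProduct.lift brA)
            (TensorProduct.tensorTensorTensorComm k H A H A (u ⊗ₜ[k] v)))
      = (TensorProduct.assoc k H H A).symm
          (TensorProduct.map LinearMap.id (copairPhi brA v)
            (TensorProduct.map (brH h) LinearMap.id u))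
      - TensorProduct.map (TensorProduct.comm k H H).toLinearMap LinearMap.id
          ((TensorProduct.assoc k H H A).symm
            (TensorProduct.map LinearMap.id (copairPhi brA u)
              (TensorProduct.map (brH h) LinearMap.id v))) := by
    intro u v
    induction u using TensorProduct.induction_on with
    | zero => simp
    | add u₁ u₂ h₁ h₂ =>
        simp only [TensorProduct.add_tmul, map_add, copairPhi_add, TensorProduct.map_add_left,
          TensorProduct.map_add_right, LinearMap.add_apply]
        linear_combination (norm := abel) h₁ + h₂
    | tmul p x =>
      induction v using TensorProduct.induction_on with
      | zero => simp
      | add v₁ v₂ h₁ h₂ =>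
          simp only [TensorProduct.tmul_add, map_add, copairPhi_add, TensorProduct.map_add_left,
            TensorProduct.map_add_right, LinearMap.add_apply]
          linear_combination (norm := abel) h₁ + h₂
      | tmul q y =>
          simp only [TensorProduct.tensorTensorTensorComm_tmul, TensorProduct.map_tmul,
            LinearMap.id_coe, id_eq, TensorProduct.lift.tmul, copairPhi_apply,
            TensorProduct.assoc_symm_tmul, LinearEquiv.coe_coe, TensorProduct.comm_tmul]
          rw [hAlie.1 y x]
          simp only [TensorProduct.tmul_neg, TensorProduct.neg_tmul, sub_neg_eq_add]
  have hsplit := splitH hLBH h R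
  have e := key R R
  simp only [copairPsi_apply, copairPhi_apply] at e ⊢
  rw [_root_.map_map, LinearMap.id_comp]
  rw [hsplit, map_comp_id_apply, map_comp_id_apply, hR2]
  linear_combination (norm := abel) e

end BB4

section RotConv

variable {M N P Q L : Type*}
  [AddCommGroup M] [Module k M] [AddCommGroup N] [Module k N]
  [AddCommGroup P] [Module k P] [AddCommGroup Q] [Module k Q]
  [AddCommGroup L] [Module k L]

@[simp] lemma comm_comm (x : M ⊗[k] N) :
    TensorProduct.comm k N M (TensorProduct.comm k M N x) = x := by
  induction x using TensorProduct.induction_on with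
  | zero => simp
  | tmul m n => simp
  | add u v hu hv => simp [map_add, hu, hv]

lemma xi_embed {X Y Z : Type*} [AddCommGroup X] [Module k X] [AddCommGroup Y] [Module k Y]
    [AddCommGroup Z] [Module k Z]
    (e₁ : X →ₗ[k] L) (e₂ : Y →ₗ[k] L) (e₃ : Z →ₗ[k] L) (w : (X ⊗[k] Y) ⊗[k] Z) :
    ξmap k L (TensorProduct.map (TensorProduct.map e₁ e₂) e₃ w)
      = TensorProduct.map (TensorProduct.map e₂ e₃) e₁ (rot3 k X Y Z w) := by
  induction w using TensorProduct.induction_on with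
  | zero => simp
  | add u v hu hv => simp only [map_add, hu, hv]
  | tmul u z =>
    induction u using TensorProduct.induction_on with
    | zero => simp
    | add u v hu hv => simp only [map_add, TensorProduct.add_tmul, hu, hv]
    | tmul x y => simp [ξmap, rot3]

@[simp] lemma rot3_cube (w : (M ⊗[k] N) ⊗[k] P) :
    rot3 k P M N (rot3 k N P M (rot3 k M N P w)) = w := by
  induction w using TensorProduct.induction_on with
  | zero => simp
  | add u v hu hv => simp only [map_add, hu, hv]
  | tmul u z =>
    induction u using TensorProduct.induction_on with
    | zero => simp
    | add u v hu hv => simp only [map_add, TensorProduct.add_tmul, hu, hv]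
    | tmul x y => simp [rot3]

lemma hlpA (u : M ⊗[k] N) (p : P) :
    rot3 k N P M (rot3 k M N P (u ⊗ₜ[k] p))
      = (TensorProduct.assoc k P M N).symm (p ⊗ₜ[k] u) := by
  induction u using TensorProduct.induction_on with
  | zero => simp
  | add u v hu hv => simp only [map_add, TensorProduct.add_tmul, TensorProduct.tmul_add, hu, hv]
  | tmul m n => simp [rot3]

lemma hlpB (u : M ⊗[k] N) (p : P) :
    rot3 k N M P ((TensorProduct.comm k M N u) ⊗ₜ[k] p)
      = swapR k M N P (u ⊗ₜ[k] p) := by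
  induction u using TensorProduct.induction_on with
  | zero => simp
  | add u v hu hv => simp only [map_add, TensorProduct.add_tmul, hu, hv]
  | tmul m n => simp [rot3]

lemma hlpC (u : M ⊗[k] N) (p : P) :
    swapR k M N P (u ⊗ₜ[k] p)
      = TensorProduct.map (TensorProduct.comm k P M).toLinearMap LinearMap.id
          ((TensorProduct.assoc k P M N).symm (p ⊗ₜ[k] u)) := by
  induction u using TensorProduct.induction_on with
  | zero => simp
  | add u v hu hv => simp only [map_add, TensorProduct.add_tmul, TensorProduct.tmul_add, hu, hv]
  | tmul m n => simp

/-- C1 -/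
lemma convC1 (g : Q →ₗ[k] M ⊗[k] N) (w : P ⊗[k] Q) :
    rot3 k N P M (rot3 k M N P
        (TensorProduct.map g LinearMap.id (TensorProduct.comm k P Q w)))
      = (TensorProduct.assoc k P M N).symm (TensorProduct.map LinearMap.id g w) := by
  induction w using TensorProduct.induction_on with
  | zero => simp
  | add u v hu hv => simp only [map_add, hu, hv]
  | tmul p q => simpa using hlpA (g q) p

/-- C3 -/
lemma convC3 (g : P →ₗ[k] M ⊗[k] N) (w : P ⊗[k] Q) :
    rot3 k N M Q
        (TensorProduct.map ((TensorProduct.comm k M N).toLinearMap ∘ₗ g) LinearMap.id w)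
      = swapR k M N Q (TensorProduct.map g LinearMap.id w) := by
  induction w using TensorProduct.induction_on with
  | zero => simp
  | add u v hu hv => simp only [map_add, hu, hv]
  | tmul p q => simpa using hlpB (g p) q

/-- C2 -/
lemma convC2 (g : Q →ₗ[k] M ⊗[k] N) (w : P ⊗[k] Q) :
    rot3 k N M P
        (TensorProduct.map ((TensorProduct.comm k M N).toLinearMap ∘ₗ g) LinearMap.id
          (TensorProduct.comm k P Q w))
      = TensorProduct.map (TensorProduct.comm k P M).toLinearMap LinearMap.id
          ((TensorProduct.assoc k P M N).symm (TensorProduct.map LinearMap.id g w)) := by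
  induction w using TensorProduct.induction_on with
  | zero => simp
  | add u v hu hv => simp only [map_add, hu, hv]
  | tmul p q =>
      have := (hlpB (g q) p).trans (hlpC (g q) p)
      simpa using this

end RotConv

section Double

variable {brA : A →ₗ[k] A →ₗ[k] A} {δA : A →ₗ[k] A ⊗[k] A}
variable {brH : H →ₗ[k] H →ₗ[k] H} {δH : H →ₗ[k] H ⊗[k] H}
variable {R : H ⊗[k] A}

local notation "ι1" => LinearMap.inl k A H
local notation "ι2" => LinearMap.inr k A H
local notation "Φm" => copairPhi brA R
local notation "Ψm" => copairPsi brH R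
local notation "δD" => bbCobracket δA δH (copairPhi brA R) (copairPsi brH R) 0 0
local notation "Bm" => bbBracket brA brH (0 : H →ₗ[k] A →ₗ[k] A) (0 : H →ₗ[k] A →ₗ[k] H)
    (0 : H →ₗ[k] H →ₗ[k] A) (0 : A →ₗ[k] A →ₗ[k] H)

lemma bbBracket_apply (x y : A × H) :
    Bm x y = (brA x.1 y.1, brH x.2 y.2) := by
  simp [bbBracket]

lemma deltaD_apply (x : A × H) :
    δD x = TensorProduct.map ι1 ι1 (δA x.1)
      + TensorProduct.map ι2 ι1 (Φm x.1)
      - TensorProduct.map ι1 ι2 (TensorProduct.comm k H A (Φm x.1))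
      + (TensorProduct.map ι2 ι2 (δH x.2)
      + TensorProduct.map ι2 ι1 (Ψm x.2)
      - TensorProduct.map ι1 ι2 (TensorProduct.comm k H A (Ψm x.2))) := by
  simp [bbCobracket]

lemma dblLieAlg (hAl : IsLieAlg brA) (hHl : IsLieAlg brH) :
    IsLieAlg (bbBracket brA brH (0 : H →ₗ[k] A →ₗ[k] A) (0 : H →ₗ[k] A →ₗ[k] H)
      (0 : H →ₗ[k] H →ₗ[k] A) (0 : A →ₗ[k] A →ₗ[k] H)) := by
  constructor
  · intro x y
    rw [bbBracket_apply, bbBracket_apply, hAl.1 x.1 y.1, hHl.1 x.2 y.2, Prod.neg_mk]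
  · intro x y z
    simp only [bbBracket_apply, Prod.mk_add_mk]
    exact Prod.mk_eq_zero.mpr ⟨hAl.2 x.1 y.1 z.1, hHl.2 x.2 y.2 z.2⟩

end Double

section Double2

variable {brA : A →ₗ[k] A →ₗ[k] A} {δA : A →ₗ[k] A ⊗[k] A}
variable {brH : H →ₗ[k] H →ₗ[k] H} {δH : H →ₗ[k] H ⊗[k] H}
variable {R : H ⊗[k] A}

local notation "ι1" => LinearMap.inl k A H
local notation "ι2" => LinearMap.inr k A H
local notation "Φm" => copairPhi brA R
local notation "Ψm" => copairPsi brH R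
local notation "δD" => bbCobracket δA δH (copairPhi brA R) (copairPsi brH R) 0 0

lemma swapR_def {M N P : Type*} [AddCommGroup M] [Module k M] [AddCommGroup N] [Module k N]
    [AddCommGroup P] [Module k P] (x : (M ⊗[k] N) ⊗[k] P) :
    swapR k M N P x = (TensorProduct.assoc k M P N).symm
      (TensorProduct.map LinearMap.id (TensorProduct.comm k N P).toLinearMap
        (TensorProduct.assoc k M N P x)) := rfl

lemma deltaD_inl (a : A) :
    δD ((a, 0) : A × H) = TensorProduct.map ι1 ι1 (δA a)
      + TensorProduct.map ι2 ι1 (Φm a)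
      - TensorProduct.map ι1 ι2 (TensorProduct.comm k H A (Φm a)) := by
  rw [deltaD_apply]; simp

lemma deltaD_inr (h : H) :
    δD ((0, h) : A × H) = TensorProduct.map ι2 ι2 (δH h)
      + TensorProduct.map ι2 ι1 (Ψm h)
      - TensorProduct.map ι1 ι2 (TensorProduct.comm k H A (Ψm h)) := by
  rw [deltaD_apply]; simp

lemma expandInl {Y : Type*} [AddCommGroup Y] [Module k Y] (e : Y →ₗ[k] A × H)
    (w : A ⊗[k] Y) :
    TensorProduct.map δD LinearMap.id (TensorProduct.map ι1 e w)
      = TensorProduct.map (TensorProduct.map ι1 ι1) e (TensorProduct.map δA LinearMap.id w)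
      + TensorProduct.map (TensorProduct.map ι2 ι1) e (TensorProduct.map Φm LinearMap.id w)
      - TensorProduct.map (TensorProduct.map ι1 ι2) e
          (TensorProduct.map ((TensorProduct.comm k H A).toLinearMap ∘ₗ Φm) LinearMap.id w) := by
  induction w using TensorProduct.induction_on with
  | zero => simp
  | add u v hu hv =>
      simp only [map_add, hu, hv]
      abel
  | tmul a y =>
      simp only [TensorProduct.map_tmul, LinearMap.id_coe, id_eq, LinearMap.coe_comp,
        Function.comp_apply]
      rw [show (ι1 a : A × H) = ((a, 0) : A × H) from rfl, deltaD_inl]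
      rw [TensorProduct.sub_tmul, TensorProduct.add_tmul]
      rfl

lemma expandInr {Y : Type*} [AddCommGroup Y] [Module k Y] (e : Y →ₗ[k] A × H)
    (w : H ⊗[k] Y) :
    TensorProduct.map δD LinearMap.id (TensorProduct.map ι2 e w)
      = TensorProduct.map (TensorProduct.map ι2 ι2) e (TensorProduct.map δH LinearMap.id w)
      + TensorProduct.map (TensorProduct.map ι2 ι1) e (TensorProduct.map Ψm LinearMap.id w)
      - TensorProduct.map (TensorProduct.map ι1 ι2) e
          (TensorProduct.map ((TensorProduct.comm k H A).toLinearMap ∘ₗ Ψm) LinearMap.id w) := by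
  induction w using TensorProduct.induction_on with
  | zero => simp
  | add u v hu hv =>
      simp only [map_add, hu, hv]
      abel
  | tmul h y =>
      simp only [TensorProduct.map_tmul, LinearMap.id_coe, id_eq, LinearMap.coe_comp,
        Function.comp_apply]
      rw [show (ι2 h : A × H) = ((0, h) : A × H) from rfl, deltaD_inr]
      rw [TensorProduct.sub_tmul, TensorProduct.add_tmul]
      rfl

end Double2

section Double3

variable {brA : A →ₗ[k] A →ₗ[k] A} {δA : A →ₗ[k] A ⊗[k] A}
variable {brH : H →ₗ[k] H →ₗ[k] H} {δH : H →ₗ[k] H ⊗[k] H}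
variable {R : H ⊗[k] A}

local notation "ι1" => LinearMap.inl k A H
local notation "ι2" => LinearMap.inr k A H
local notation "Φm" => copairPhi brA R
local notation "Ψm" => copairPsi brH R
local notation "δD" => bbCobracket δA δH (copairPhi brA R) (copairPsi brH R) 0 0

lemma myRC {M : Type*} [AddCommGroup M] : IsRightCancelAdd M := inferInstance

lemma coJac_inl
    (hacA : ∀ x, TensorProduct.comm k A A (δA x) = - δA x)
    (hJA : ∀ x, TensorProduct.map δA LinearMap.id (δA x)
      + ξmap k A (TensorProduct.map δA LinearMap.id (δA x))
      + ξmap k A (ξmap k A (TensorProduct.map δA LinearMap.id (δA x))) = 0)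
    (hc1 : ∀ a, TensorProduct.map δH LinearMap.id (Φm a)
      = (TensorProduct.assoc k H H A).symm (TensorProduct.map LinearMap.id Φm (Φm a))
      - TensorProduct.map (TensorProduct.comm k H H).toLinearMap LinearMap.id
          ((TensorProduct.assoc k H H A).symm (TensorProduct.map LinearMap.id Φm (Φm a))))
    (hc3 : ∀ a, (TensorProduct.assoc k H A A).symm
          (TensorProduct.map LinearMap.id δA (Φm a))
      = TensorProduct.map Φm LinearMap.id (δA a)
      + TensorProduct.map (TensorProduct.comm k A H).toLinearMap LinearMap.id
          ((TensorProduct.assoc k A H A).symm (TensorProduct.map LinearMap.id Φm (δA a)))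
      + TensorProduct.map Ψm LinearMap.id (Φm a)
      - swapR k H A A (TensorProduct.map Ψm LinearMap.id (Φm a)))
    (a : A) :
    TensorProduct.map δD LinearMap.id (δD ((a, 0) : A × H))
      + ξmap k (A × H) (TensorProduct.map δD LinearMap.id (δD ((a, 0) : A × H)))
      + ξmap k (A × H) (ξmap k (A × H)
          (TensorProduct.map δD LinearMap.id (δD ((a, 0) : A × H)))) = 0 := by
  haveI : IsRightCancelAdd (((A × H) ⊗[k] (A × H)) ⊗[k] (A × H)) := myRC (M := ((A × H) ⊗[k] (A × H)) ⊗[k] (A × H))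
  have hZ1 : TensorProduct.map δA LinearMap.id (δA a)
      + rot3 k A A A (TensorProduct.map δA LinearMap.id (δA a))
      + rot3 k A A A (rot3 k A A A (TensorProduct.map δA LinearMap.id (δA a))) = 0 := by
    have := hJA a; rwa [ξmap_eq_rot3] at this
  have cv4 := convC2 Φm (δA a)
  rw [hacA a] at cv4
  simp only [map_neg] at cv4
  have cv2 := convC3 Ψm (Φm a)
  have cv3 := convC1 δA (Φm a)
  have hZ2 : TensorProduct.map Φm LinearMap.id (δA a)
      + TensorProduct.map Ψm LinearMap.id (Φm a)
      - rot3 k A H A (TensorProduct.map ((TensorProduct.comm k H A).toLinearMap ∘ₗ Φm)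
          LinearMap.id (δA a))
      - rot3 k A H A (TensorProduct.map ((TensorProduct.comm k H A).toLinearMap ∘ₗ Ψm)
          LinearMap.id (Φm a))
      - rot3 k A H A (rot3 k A A H (TensorProduct.map δA LinearMap.id
          (TensorProduct.comm k H A (Φm a)))) = 0 := by
    linear_combination (norm := abel) cv4 - cv2 - cv3 - hc3 a
  have cw1 := convC2 Φm (Φm a)
  have cw2 := convC1 Φm (Φm a)
  have hZ3 : TensorProduct.map δH LinearMap.id (Φm a)
      + rot3 k A H H (TensorProduct.map ((TensorProduct.comm k H A).toLinearMap ∘ₗ Φm)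
          LinearMap.id (TensorProduct.comm k H A (Φm a)))
      - rot3 k A H H (rot3 k H A H (TensorProduct.map Φm LinearMap.id
          (TensorProduct.comm k H A (Φm a)))) = 0 := by
    linear_combination (norm := abel) hc1 a + cw1 - cw2
  have hZ2b := congrArg (⇑(rot3 k H A A)) hZ2
  have hZ2c := congrArg (⇑(rot3 k A A H)) hZ2b
  simp only [map_add, map_sub, map_zero, rot3_cube] at hZ2b hZ2c
  have hZ3b := congrArg (⇑(rot3 k H H A)) hZ3
  have hZ3c := congrArg (⇑(rot3 k H A H)) hZ3b
  simp only [map_add, map_sub, map_zero, rot3_cube] at hZ3b hZ3c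
  have E1 := congrArg (⇑(TensorProduct.map (TensorProduct.map ι1 ι1) ι1)) hZ1
  have E2 := congrArg (⇑(TensorProduct.map (TensorProduct.map ι2 ι1) ι1)) hZ2
  have E3 := congrArg (⇑(TensorProduct.map (TensorProduct.map ι1 ι1) ι2)) hZ2b
  have E4 := congrArg (⇑(TensorProduct.map (TensorProduct.map ι1 ι2) ι1)) hZ2c
  have E5 := congrArg (⇑(TensorProduct.map (TensorProduct.map ι2 ι2) ι1)) hZ3
  have E6 := congrArg (⇑(TensorProduct.map (TensorProduct.map ι2 ι1) ι2)) hZ3b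
  have E7 := congrArg (⇑(TensorProduct.map (TensorProduct.map ι1 ι2) ι2)) hZ3c
  simp only [map_add, map_sub, map_zero] at E1 E2 E3 E4 E5 E6 E7
  rw [deltaD_inl a]
  simp only [map_add, map_sub, expandInl, expandInr, xi_embed]
  linear_combination (norm := abel) E1 + E2 + E3 + E4 + E5 + E6 + E7

end Double3

section Double4

variable {brA : A →ₗ[k] A →ₗ[k] A} {δA : A →ₗ[k] A ⊗[k] A}
variable {brH : H →ₗ[k] H →ₗ[k] H} {δH : H →ₗ[k] H ⊗[k] H}
variable {R : H ⊗[k] A}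

local notation "ι1" => LinearMap.inl k A H
local notation "ι2" => LinearMap.inr k A H
local notation "Φm" => copairPhi brA R
local notation "Ψm" => copairPsi brH R
local notation "δD" => bbCobracket δA δH (copairPhi brA R) (copairPsi brH R) 0 0

set_option maxHeartbeats 2000000 in
lemma coJac_inr
    (hacH : ∀ x, TensorProduct.comm k H H (δH x) = - δH x)
    (hJH : ∀ x, TensorProduct.map δH LinearMap.id (δH x)
      + ξmap k H (TensorProduct.map δH LinearMap.id (δH x))
      + ξmap k H (ξmap k H (TensorProduct.map δH LinearMap.id (δH x))) = 0)
    (hc2 : ∀ h, TensorProduct.map LinearMap.id δA (Ψm h)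
      = TensorProduct.assoc k H A A (TensorProduct.map Ψm LinearMap.id (Ψm h))
      - TensorProduct.map LinearMap.id (TensorProduct.comm k A A).toLinearMap
          (TensorProduct.assoc k H A A (TensorProduct.map Ψm LinearMap.id (Ψm h))))
    (hc4 : ∀ h, TensorProduct.map δH LinearMap.id (Ψm h)
      = (TensorProduct.assoc k H H A).symm (TensorProduct.map LinearMap.id Ψm (δH h))
      + swapR k H A H (TensorProduct.map Ψm LinearMap.id (δH h))
      + (TensorProduct.assoc k H H A).symm (TensorProduct.map LinearMap.id Φm (Ψm h))
      - TensorProduct.map (TensorProduct.comm k H H).toLinearMap LinearMap.id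
          ((TensorProduct.assoc k H H A).symm (TensorProduct.map LinearMap.id Φm (Ψm h))))
    (h : H) :
    TensorProduct.map δD LinearMap.id (δD ((0, h) : A × H))
      + ξmap k (A × H) (TensorProduct.map δD LinearMap.id (δD ((0, h) : A × H)))
      + ξmap k (A × H) (ξmap k (A × H)
          (TensorProduct.map δD LinearMap.id (δD ((0, h) : A × H)))) = 0 := by
  haveI : IsRightCancelAdd (((A × H) ⊗[k] (A × H)) ⊗[k] (A × H)) := myRC (M := ((A × H) ⊗[k] (A × H)) ⊗[k] (A × H))
  have hZ1 : TensorProduct.map δH LinearMap.id (δH h)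
      + rot3 k H H H (TensorProduct.map δH LinearMap.id (δH h))
      + rot3 k H H H (rot3 k H H H (TensorProduct.map δH LinearMap.id (δH h))) = 0 := by
    have := hJH h; rwa [ξmap_eq_rot3] at this
  have d1 := convC3 Ψm (δH h)
  have d2 := convC2 Φm (Ψm h)
  have d3 := convC1 Ψm (TensorProduct.comm k H H (δH h))
  simp only [_root_.comm_comm] at d3
  rw [hacH h] at d3
  simp only [map_neg] at d3
  have d4 := convC1 Φm (Ψm h)
  have hZ3 : TensorProduct.map δH LinearMap.id (Ψm h)
      - rot3 k A H H (TensorProduct.map ((TensorProduct.comm k H A).toLinearMap ∘ₗ Ψm)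
          LinearMap.id (δH h))
      + rot3 k A H H (TensorProduct.map ((TensorProduct.comm k H A).toLinearMap ∘ₗ Φm)
          LinearMap.id (TensorProduct.comm k H A (Ψm h)))
      + rot3 k A H H (rot3 k H A H (TensorProduct.map Ψm LinearMap.id (δH h)))
      - rot3 k A H H (rot3 k H A H (TensorProduct.map Φm LinearMap.id
          (TensorProduct.comm k H A (Ψm h)))) = 0 := by
    linear_combination (norm := abel) hc4 h - d1 + d2 + d3 - d4
  have e1 := convC3 Ψm (Ψm h)
  have e2 := convC1 δA (Ψm h)
  have e3 := congrArg (⇑(TensorProduct.assoc k H A A).symm) (hc2 h)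
  simp only [map_sub] at e3
  rw [LinearEquiv.symm_apply_apply, ← swapR_def] at e3
  have hZ2 : TensorProduct.map Ψm LinearMap.id (Ψm h)
      - rot3 k A H A (TensorProduct.map ((TensorProduct.comm k H A).toLinearMap ∘ₗ Ψm)
          LinearMap.id (Ψm h))
      - rot3 k A H A (rot3 k A A H (TensorProduct.map δA LinearMap.id
          (TensorProduct.comm k H A (Ψm h)))) = 0 := by
    linear_combination (norm := abel) - e1 - e2 - e3
  have hZ2b := congrArg (⇑(rot3 k H A A)) hZ2
  have hZ2c := congrArg (⇑(rot3 k A A H)) hZ2b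
  simp only [map_add, map_sub, map_zero, rot3_cube] at hZ2b hZ2c
  have hZ3b := congrArg (⇑(rot3 k H H A)) hZ3
  have hZ3c := congrArg (⇑(rot3 k H A H)) hZ3b
  simp only [map_add, map_sub, map_zero, rot3_cube] at hZ3b hZ3c
  have E1 := congrArg (⇑(TensorProduct.map (TensorProduct.map ι2 ι2) ι2)) hZ1
  have E2 := congrArg (⇑(TensorProduct.map (TensorProduct.map ι2 ι1) ι1)) hZ2
  have E3 := congrArg (⇑(TensorProduct.map (TensorProduct.map ι1 ι1) ι2)) hZ2b
  have E4 := congrArg (⇑(TensorProduct.map (TensorProduct.map ι1 ι2) ι1)) hZ2c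
  have E5 := congrArg (⇑(TensorProduct.map (TensorProduct.map ι2 ι2) ι1)) hZ3
  have E6 := congrArg (⇑(TensorProduct.map (TensorProduct.map ι2 ι1) ι2)) hZ3b
  have E7 := congrArg (⇑(TensorProduct.map (TensorProduct.map ι1 ι2) ι2)) hZ3c
  simp only [map_add, map_sub, map_zero] at E1 E2 E3 E4 E5 E6 E7
  rw [deltaD_inr h]
  simp only [map_add, map_sub, expandInl, expandInr, xi_embed]
  linear_combination (norm := abel) E1 + E2 + E3 + E4 + E5 + E6 + E7

end Double4

section Double5

variable {brA : A →ₗ[k] A →ₗ[k] A} {δA : A →ₗ[k] A ⊗[k] A}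
variable {brH : H →ₗ[k] H →ₗ[k] H} {δH : H →ₗ[k] H ⊗[k] H}
variable {R : H ⊗[k] A}

local notation "ι1" => LinearMap.inl k A H
local notation "ι2" => LinearMap.inr k A H
local notation "Φm" => copairPhi brA R
local notation "Ψm" => copairPsi brH R
local notation "δD" => bbCobracket δA δH (copairPhi brA R) (copairPsi brH R) 0 0
local notation "Bm" => bbBracket brA brH (0 : H →ₗ[k] A →ₗ[k] A) (0 : H →ₗ[k] A →ₗ[k] H)
    (0 : H →ₗ[k] H →ₗ[k] A) (0 : A →ₗ[k] A →ₗ[k] H)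

lemma conj7b (hH : IsLieAlg brH) (h : H) (a : A) :
    TensorProduct.map (brH.flip h) LinearMap.id (copairPhi brA R a)
      + TensorProduct.map LinearMap.id (brA a) (copairPsi brH R h) = 0 := by
  simp only [copairPhi_apply, copairPsi_apply]
  induction R using TensorProduct.induction_on with
  | zero => simp
  | add u v hu hv =>
      simp only [map_add] at hu hv ⊢
      rw [show ∀ x y z w : H ⊗[k] A, x + y + (z + w) = (x + z) + (y + w) from
        fun _ _ _ _ => by abel, hu, hv, add_zero]
  | tmul p x =>
      simp only [_root_.map_map, TensorProduct.map_tmul, LinearMap.id_coe, id_eq,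
        LinearMap.coe_comp, Function.comp_apply, LinearMap.flip_apply]
      rw [hH.1 p h, TensorProduct.neg_tmul]
      abel

lemma dblAnticomm (hacA : ∀ x, TensorProduct.comm k A A (δA x) = - δA x)
    (hacH : ∀ x, TensorProduct.comm k H H (δH x) = - δH x) (x : A × H) :
    TensorProduct.comm k (A × H) (A × H) (δD x) = - δD x := by
  rw [deltaD_apply]
  simp only [map_add, map_sub, map_neg, comm_natural, hacA, hacH, comm_comm]
  abel

lemma pushMap {X X' Y : Type*} [AddCommGroup X] [Module k X] [AddCommGroup X'] [Module k X']
    [AddCommGroup Y] [Module k Y]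
    (f : X →ₗ[k] X') (e₁ : X' →ₗ[k] A × H) {L : (A × H) →ₗ[k] A × H} {e₀ : X →ₗ[k] A × H}
    (hL : ∀ c, L (e₀ c) = e₁ (f c)) (e : Y →ₗ[k] A × H) (w : X ⊗[k] Y) :
    TensorProduct.map L LinearMap.id (TensorProduct.map e₀ e w)
      = TensorProduct.map e₁ e (TensorProduct.map f LinearMap.id w) := by
  induction w using TensorProduct.induction_on with
  | zero => simp
  | add u v hu hv => simp only [map_add, hu, hv]
  | tmul c y => simp [hL]

lemma pushMapR {X X' Y : Type*} [AddCommGroup X] [Module k X] [AddCommGroup X'] [Module k X']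
    [AddCommGroup Y] [Module k Y]
    (f : X →ₗ[k] X') (e₁ : X' →ₗ[k] A × H) {L : (A × H) →ₗ[k] A × H} {e₀ : X →ₗ[k] A × H}
    (hL : ∀ c, L (e₀ c) = e₁ (f c)) (e : Y →ₗ[k] A × H) (w : Y ⊗[k] X) :
    TensorProduct.map LinearMap.id L (TensorProduct.map e e₀ w)
      = TensorProduct.map e e₁ (TensorProduct.map LinearMap.id f w) := by
  induction w using TensorProduct.induction_on with
  | zero => simp
  | add u v hu hv => simp only [map_add, hu, hv]
  | tmul y c => simp [hL]

set_option maxHeartbeats 2000000 in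
lemma dblLB (hAl : IsLieAlg brA) (hHl : IsLieAlg brH)
    (hLBA : ∀ x y, δA (brA x y)
      = TensorProduct.map (brA x) LinearMap.id (δA y)
      + TensorProduct.map LinearMap.id (brA x) (δA y)
      + TensorProduct.map LinearMap.id (brA.flip y) (δA x)
      + TensorProduct.map (brA.flip y) LinearMap.id (δA x))
    (hLBH : ∀ x y, δH (brH x y)
      = TensorProduct.map (brH x) LinearMap.id (δH y)
      + TensorProduct.map LinearMap.id (brH x) (δH y)
      + TensorProduct.map LinearMap.id (brH.flip y) (δH x)
      + TensorProduct.map (brH.flip y) LinearMap.id (δH x))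
    (x y : A × H) :
    δD (Bm x y)
      = TensorProduct.map (Bm x) LinearMap.id (δD y)
      + TensorProduct.map LinearMap.id (Bm x) (δD y)
      + TensorProduct.map LinearMap.id (LinearMap.flip Bm y) (δD x)
      + TensorProduct.map (LinearMap.flip Bm y) LinearMap.id (δD x) := by
  haveI : IsRightCancelAdd ((A × H) ⊗[k] (A × H)) := myRC
  obtain ⟨a, g⟩ := x
  obtain ⟨b, h⟩ := y
  have p1 : ∀ c : A, Bm (a, g) (ι1 c) = ι1 (brA a c) := by
    intro c; rw [show (ι1 c : A × H) = ((c, 0) : A × H) from rfl, bbBracket_apply]; simp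
  have p2 : ∀ c : H, Bm (a, g) (ι2 c) = ι2 (brH g c) := by
    intro c; rw [show (ι2 c : A × H) = ((0, c) : A × H) from rfl, bbBracket_apply]; simp
  have p3 : ∀ c : A, LinearMap.flip Bm (b, h) (ι1 c) = ι1 (brA.flip b c) := by
    intro c
    rw [LinearMap.flip_apply, show (ι1 c : A × H) = ((c, 0) : A × H) from rfl, bbBracket_apply]
    simp
  have p4 : ∀ c : H, LinearMap.flip Bm (b, h) (ι2 c) = ι2 (brH.flip h c) := by
    intro c
    rw [LinearMap.flip_apply, show (ι2 c : A × H) = ((0, c) : A × H) from rfl, bbBracket_apply]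
    simp
  have z1 := congrArg (⇑(TensorProduct.map ι2 ι1)) (conj7 (brH := brH) (R := R) hAl g b)
  have z2 := congrArg (⇑(TensorProduct.map ι2 ι1)) (conj7b (brA := brA) (R := R) hHl h a)
  have c3 := congrArg (⇑(TensorProduct.comm k H A)) (conj7 (brH := brH) (R := R) hAl g b)
  have c4 := congrArg (⇑(TensorProduct.comm k H A)) (conj7b (brA := brA) (R := R) hHl h a)
  simp only [map_add, map_zero, comm_natural] at c3 c4
  have z3 := congrArg (⇑(TensorProduct.map ι1 ι2)) c3
  have z4 := congrArg (⇑(TensorProduct.map ι1 ι2)) c4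
  simp only [map_add, map_zero] at z1 z2 z3 z4
  rw [bbBracket_apply]
  simp only [deltaD_apply]
  rw [hLBA a b, hLBH g h, conj5 (R := R) hAl a b, conj6 (R := R) hHl g h]
  simp only [map_add, map_sub, comm_natural,
    pushMap (brA a) ι1 p1, pushMap (brH g) ι2 p2,
    pushMap (brA.flip b) ι1 p3, pushMap (brH.flip h) ι2 p4,
    pushMapR (brA a) ι1 p1, pushMapR (brH g) ι2 p2,
    pushMapR (brA.flip b) ι1 p3, pushMapR (brH.flip h) ι2 p4]
  linear_combination (norm := abel) - z1 - z2 + z3 + z4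

end Double5

/-- For a skew-copairing `R = R¹ ⊗ R² ∈ H ⊗ A` between Lie bialgebras, the
coactions `φ(a) = R¹ ⊗ [a, R²]` and `ψ(h) = [h, R¹] ⊗ R²` form a matched pair of Lie
coalgebras, `A` is a left `H`-comodule Lie algebra, `H` is a right `A`-comodule Lie algebra,
(AA2) holds, and consequently `A ▶◀^R H` is a Lie bialgebra. -/
theorem skew_copairing_double_cross_coproduct [CharZero k]
    (brA : A →ₗ[k] A →ₗ[k] A) (δA : A →ₗ[k] A ⊗[k] A)
    (brH : H →ₗ[k] H →ₗ[k] H) (δH : H →ₗ[k] H ⊗[k] H)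
    (R : H ⊗[k] A)
    (hA : IsLieBialg brA δA) (hH : IsLieBialg brH δH)
    -- `R` is a skew-copairing: `R¹ ⊗ δ_A(R²) = [R¹, r¹] ⊗ r² ⊗ R²` in `H ⊗ A ⊗ A`
    (hR1 : TensorProduct.map LinearMap.id δA R
        = TensorProduct.map (TensorProduct.lift brH) (TensorProduct.comm k A A).toLinearMap
            (TensorProduct.tensorTensorTensorComm k H A H A (R ⊗ₜ[k] R)))
    -- and `δ_H(R¹) ⊗ R² = R¹ ⊗ r¹ ⊗ [R², r²]` in `H ⊗ H ⊗ A`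
    (hR2 : TensorProduct.map δH LinearMap.id R
        = TensorProduct.map LinearMap.id (TensorProduct.lift brA)
            (TensorProduct.tensorTensorTensorComm k H A H A (R ⊗ₜ[k] R))) :
    let φ := copairPhi brA R
    let ψ := copairPsi brH R
    -- `A` is a left `H`-comodule
    (∀ a, TensorProduct.map δH LinearMap.id (φ a)
        = (TensorProduct.assoc k H H A).symm (TensorProduct.map LinearMap.id φ (φ a))
        - TensorProduct.map (TensorProduct.comm k H H).toLinearMap LinearMap.id
            ((TensorProduct.assoc k H H A).symm (TensorProduct.map LinearMap.id φ (φ a)))) ∧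
    -- `H` is a right `A`-comodule
    (∀ h, TensorProduct.map LinearMap.id δA (ψ h)
        = TensorProduct.assoc k H A A (TensorProduct.map ψ LinearMap.id (ψ h))
        - TensorProduct.map LinearMap.id (TensorProduct.comm k A A).toLinearMap
            (TensorProduct.assoc k H A A (TensorProduct.map ψ LinearMap.id (ψ h)))) ∧
    -- (BB3)
    (∀ a, (TensorProduct.assoc k H A A).symm (TensorProduct.map LinearMap.id δA (φ a))
        = TensorProduct.map φ LinearMap.id (δA a)
        + TensorProduct.map (TensorProduct.comm k A H).toLinearMap LinearMap.id
            ((TensorProduct.assoc k A H A).symm (TensorProduct.map LinearMap.id φ (δA a)))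
        + TensorProduct.map ψ LinearMap.id (φ a)
        - swapR k H A A (TensorProduct.map ψ LinearMap.id (φ a))) ∧
    -- (BB4)
    (∀ h, TensorProduct.map δH LinearMap.id (ψ h)
        = (TensorProduct.assoc k H H A).symm (TensorProduct.map LinearMap.id ψ (δH h))
        + swapR k H A H (TensorProduct.map ψ LinearMap.id (δH h))
        + (TensorProduct.assoc k H H A).symm (TensorProduct.map LinearMap.id φ (ψ h))
        - TensorProduct.map (TensorProduct.comm k H H).toLinearMap LinearMap.id
            ((TensorProduct.assoc k H H A).symm (TensorProduct.map LinearMap.id φ (ψ h)))) ∧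
    -- `A` is a left `H`-comodule Lie algebra
    (∀ a b, φ (brA a b)
        = TensorProduct.map LinearMap.id (brA.flip b) (φ a)
        + TensorProduct.map LinearMap.id (brA a) (φ b)) ∧
    -- `H` is a right `A`-comodule Lie algebra
    (∀ h g, ψ (brH h g)
        = TensorProduct.map (brH h) LinearMap.id (ψ g)
        + TensorProduct.map (brH.flip g) LinearMap.id (ψ h)) ∧
    -- (AA2)
    (∀ h a, TensorProduct.map (brH h) LinearMap.id (φ a)
        + TensorProduct.map LinearMap.id (brA.flip a) (ψ h) = 0) ∧
    -- `A ▶◀^R H` is a Lie bialgebra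
    IsLieBialg (bbBracket brA brH 0 0 0 0) (bbCobracket δA δH φ ψ 0 0) := by
  intro φ ψ
  haveI : IsRightCancelAdd (((A × H) ⊗[k] (A × H)) ⊗[k] (A × H)) := myRC (M := ((A × H) ⊗[k] (A × H)) ⊗[k] (A × H))
  refine ⟨conj1 hA.1 hR2, conj2 hH.1 hR1, conj3 hA.1 hH.1 hA.2.2 hR1,
    conj4 hA.1 hH.2.2 hR2, conj5 hA.1, conj6 hH.1, conj7 hA.1,
    dblLieAlg hA.1 hH.1, ⟨dblAnticomm hA.2.1.1 hH.2.1.1, ?_⟩,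
    dblLB hA.1 hH.1 hA.2.2 hH.2.2⟩
  intro x
  have h1 := coJac_inl (brA := brA) (δA := δA) (brH := brH) (δH := δH) (R := R)
    hA.2.1.1 hA.2.1.2 (conj1 hA.1 hR2) (conj3 hA.1 hH.1 hA.2.2 hR1) x.1
  have h2 := coJac_inr (brA := brA) (δA := δA) (brH := brH) (δH := δH) (R := R)
    hH.2.1.1 hH.2.1.2 (conj2 hH.1 hR1) (conj4 hA.1 hH.2.2 hR2) x.2
  have hx : (x : A × H) = (x.1, 0) + (0, x.2) := by ext <;> simp
  rw [hx]
  simp only [map_add]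
  linear_combination (norm := abel) h1 + h2

end
end

section
/- Let A and H be Lie bialgebras, ▷ : H × A → A and ◁ : H × A → H bilinear maps, and σ : H × H → A, θ : A × A → H antisymmetric bilinear maps, such that (A, H, ▷, ◁, σ, θ) is a cocycle cross product system (i.e. conditions (CC1), (CC2), (TM1), (TM2), (TBB1), (TBB2) hold, together with (CC5): [[h,g],l] + [[g,l],h] + [[l,h],g] = h ◁ σ(g,l) + g ◁ σ(l,h) + l ◁ σ(h,g) and (CC6): [[a,b],c] + [[b,c],a] + [[c,a],b] = θ(a,b) ▷ c + θ(b,c) ▷ a + θ(c,a) ▷ b, whose left-hand sides vanish since A and H are Lie algebras), and assume in addition: h₁ ⊗ h₂ ▷ a + h ◁ a₁ ⊗ a₂ = 0 in H ⊗ A; δ_A(h ▷ a) = h ▷ a₁ ⊗ a₂ + a₁ ⊗ h ▷ a₂; δ_H(h ◁ a) = h₁ ⊗ h₂ ◁ a + h₁ ◁ a ⊗ h₂; θ(a, b₁) ⊗ b₂ + θ(a₁, b) ⊗ a₂ = 0 in H ⊗ A; h₁ ⊗ σ(h₂, g) + g₁ ⊗ σ(h, g₂) = 0 in H ⊗ A;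 δ_H(θ(a,b)) = 0; δ_A(σ(h,g)) = 0, for all a, b ∈ A, h, g ∈ H. Then the vector space A ⊕ H with bracket [(a,h),(b,g)] = ([a,b] + h ▷ b − g ▷ a + σ(h,g), [h,g] + h ◁ b − g ◁ a + θ(a,b)) and the direct sum cobracket δ(a,h) = δ_A(a) + δ_H(h) is a Lie bialgebra (the double cocycle cross product A_{▷,θ} # _{◁,σ} H). -/
open TensorProduct

noncomputable section

variable {k : Type*} [Field k]
variable {A H : Type*} [AddCommGroup A] [Module k A] [AddCommGroup H] [Module k H]

lemma aux_map_sub_left {M N P Q : Type*} [AddCommGroup M] [Module k M] [AddCommGroup N]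
    [Module k N] [AddCommGroup P] [Module k P] [AddCommGroup Q] [Module k Q]
    (f₁ f₂ : M →ₗ[k] P) (g : N →ₗ[k] Q) :
    TensorProduct.map (f₁ - f₂) g = TensorProduct.map f₁ g - TensorProduct.map f₂ g := by
  ext m n
  simp [TensorProduct.sub_tmul]

lemma aux_map_sub_right {M N P Q : Type*} [AddCommGroup M] [Module k M] [AddCommGroup N]
    [Module k N] [AddCommGroup P] [Module k P] [AddCommGroup Q] [Module k Q]
    (f : M →ₗ[k] P) (g₁ g₂ : N →ₗ[k] Q) :
    TensorProduct.map f (g₁ - g₂) = TensorProduct.map f g₁ - TensorProduct.map f g₂ := by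
  ext m n
  simp [TensorProduct.tmul_sub]

lemma aux_comm_map {M N P Q : Type*} [AddCommGroup M] [Module k M] [AddCommGroup N]
    [Module k N] [AddCommGroup P] [Module k P] [AddCommGroup Q] [Module k Q]
    (f : M →ₗ[k] P) (g : N →ₗ[k] Q) (t : M ⊗[k] N) :
    TensorProduct.comm k P Q (TensorProduct.map f g t)
      = TensorProduct.map g f (TensorProduct.comm k M N t) := by
  induction t using TensorProduct.induction_on with
  | zero => simp
  | tmul m n => simp
  | add u v hu hv => simp [hu, hv]

lemma aux_xi_nat {L D : Type*} [AddCommGroup L] [Module k L] [AddCommGroup D] [Module k D]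
    (j : L →ₗ[k] D) (s : (L ⊗[k] L) ⊗[k] L) :
    ξmap k D (TensorProduct.map (TensorProduct.map j j) j s)
      = TensorProduct.map (TensorProduct.map j j) j (ξmap k L s) := by
  induction s using TensorProduct.induction_on with
  | zero => simp
  | add u v hu hv => simp only [map_add, hu, hv]
  | tmul t c =>
    induction t using TensorProduct.induction_on with
    | zero => simp
    | add u v hu hv => simp only [TensorProduct.add_tmul, map_add, hu, hv]
    | tmul u v =>
      simp [ξmap, TensorProduct.assoc_tmul, TensorProduct.comm_tmul]

lemma aux_decompL {M N : Type*} [AddCommGroup M] [Module k M] [AddCommGroup N] [Module k N]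
    (F : (A × H) →ₗ[k] (A × H)) (jM : M →ₗ[k] A × H) (jN : N →ₗ[k] A × H)
    (f1 : M →ₗ[k] A) (f2 : M →ₗ[k] H)
    (hF : ∀ m, F (jM m) = (f1 m, f2 m)) (t : M ⊗[k] N) :
    TensorProduct.map F LinearMap.id (TensorProduct.map jM jN t)
      = TensorProduct.map (LinearMap.inl k A H) jN (TensorProduct.map f1 LinearMap.id t)
        + TensorProduct.map (LinearMap.inr k A H) jN (TensorProduct.map f2 LinearMap.id t) := by
  induction t using TensorProduct.induction_on with
  | zero => simp
  | add u v hu hv => simp only [map_add, hu, hv]; abel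
  | tmul m n =>
    simp only [TensorProduct.map_tmul, LinearMap.id_coe, id_eq, hF, LinearMap.inl_apply,
      LinearMap.inr_apply]
    rw [show ((f1 m, f2 m) : A × H) = (f1 m, 0) + (0, f2 m) by simp]
    rw [TensorProduct.add_tmul]

lemma aux_decompR {M N : Type*} [AddCommGroup M] [Module k M] [AddCommGroup N] [Module k N]
    (F : (A × H) →ₗ[k] (A × H)) (jM : M →ₗ[k] A × H) (jN : N →ₗ[k] A × H)
    (f1 : M →ₗ[k] A) (f2 : M →ₗ[k] H)
    (hF : ∀ m, F (jM m) = (f1 m, f2 m)) (t : N ⊗[k] M) :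
    TensorProduct.map LinearMap.id F (TensorProduct.map jN jM t)
      = TensorProduct.map jN (LinearMap.inl k A H) (TensorProduct.map LinearMap.id f1 t)
        + TensorProduct.map jN (LinearMap.inr k A H) (TensorProduct.map LinearMap.id f2 t) := by
  induction t using TensorProduct.induction_on with
  | zero => simp
  | add u v hu hv => simp only [map_add, hu, hv]; abel
  | tmul n m =>
    simp only [TensorProduct.map_tmul, LinearMap.id_coe, id_eq, hF, LinearMap.inl_apply,
      LinearMap.inr_apply]
    rw [show ((f1 m, f2 m) : A × H) = (f1 m, 0) + (0, f2 m) by simp]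
    rw [TensorProduct.tmul_add]

set_option maxHeartbeats 4000000 in
/-- Given Lie bialgebras `A`, `H` and a cocycle cross product system
`(A, H, ▷, ◁, σ, θ)` satisfying the additional compatibilities below, the double cocycle
cross product `A_{▷,θ} # _{◁,σ} H` (cocycle bracket, direct sum cobracket) is a Lie
bialgebra. -/
theorem double_cocycle_cross_product_is_lie_bialgebra [CharZero k]
    (brA : A →ₗ[k] A →ₗ[k] A) (δA : A →ₗ[k] A ⊗[k] A)
    (brH : H →ₗ[k] H →ₗ[k] H) (δH : H →ₗ[k] H ⊗[k] H)
    (r : H →ₗ[k] A →ₗ[k] A) (l : H →ₗ[k] A →ₗ[k] H)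
    (σ : H →ₗ[k] H →ₗ[k] A) (θ : A →ₗ[k] A →ₗ[k] H)
    (hA : IsLieBialg brA δA) (hH : IsLieBialg brH δH)
    -- antisymmetry of the brackets and cocycles
    (hskA : ∀ a b, brA a b = - brA b a)
    (hskH : ∀ x y, brH x y = - brH y x)
    (hskσ : ∀ x y, σ x y = - σ y x)
    (hskθ : ∀ a b, θ a b = - θ b a)
    -- (CC1) : `h ▷ σ(g,e) + g ▷ σ(e,h) + e ▷ σ(h,g) = σ([h,g],e) + σ([g,e],h) + σ([e,h],g)`
    (hCC1 : ∀ h g e, r h (σ g e) + r g (σ e h) + r e (σ h g)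
        = σ (brH h g) e + σ (brH g e) h + σ (brH e h) g)
    -- (CC2) : `θ(a,b)◁c + θ(b,c)◁a + θ(c,a)◁b = θ(a,[b,c]) + θ(b,[c,a]) + θ(c,[a,b])`
    (hCC2 : ∀ a b c, l (θ a b) c + l (θ b c) a + l (θ c a) b
        = θ a (brA b c) + θ b (brA c a) + θ c (brA a b))
    -- (CC5) : `[[h,g],e] + [[g,e],h] + [[e,h],g] = h◁σ(g,e) + g◁σ(e,h) + e◁σ(h,g)`
    (hCC5 : ∀ h g e, brH (brH h g) e + brH (brH g e) h + brH (brH e h) g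
        = l h (σ g e) + l g (σ e h) + l e (σ h g))
    -- (CC6) : `[[a,b],c] + [[b,c],a] + [[c,a],b] = θ(a,b)▷c + θ(b,c)▷a + θ(c,a)▷b`
    (hCC6 : ∀ a b c, brA (brA a b) c + brA (brA b c) a + brA (brA c a) b
        = r (θ a b) c + r (θ b c) a + r (θ c a) b)
    -- (TM1) : `[h,g]▷a + [σ(h,g),a] = h▷(g▷a) − g▷(h▷a) + σ(h, g◁a) + σ(h◁a, g)`
    (hTM1 : ∀ h g a, r (brH h g) a + brA (σ h g) a
        = r h (r g a) - r g (r h a) + σ h (l g a) + σ (l h a) g)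
    -- (TM2) : `h◁[a,b] + [h,θ(a,b)] = (h◁a)◁b − (h◁b)◁a + θ(h▷a, b) + θ(a, h▷b)`
    (hTM2 : ∀ h a b, l h (brA a b) + brH h (θ a b)
        = l (l h a) b - l (l h b) a + θ (r h a) b + θ a (r h b))
    -- (TBB1) : `h▷[a,b] + σ(h,θ(a,b)) = [h▷a, b] + [a, h▷b] + (h◁a)▷b − (h◁b)▷a`
    (hTBB1 : ∀ h a b, r h (brA a b) + σ h (θ a b)
        = brA (r h a) b + brA a (r h b) + r (l h a) b - r (l h b) a)
    -- (TBB2) : `[h,g]◁a + θ(σ(h,g),a) = [h, g◁a] + [h◁a, g] + h◁(g▷a) − g◁(h▷a)`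
    (hTBB2 : ∀ h g a, l (brH h g) a + θ (σ h g) a
        = brH h (l g a) + brH (l h a) g + l h (r g a) - l g (r h a))
    -- `h₁ ⊗ h₂▷a + h◁a₁ ⊗ a₂ = 0` in `H ⊗ A`
    (hAA : ∀ h a, TensorProduct.map LinearMap.id (r.flip a) (δH h)
        + TensorProduct.map (l h) LinearMap.id (δA a) = 0)
    -- `δ_A(h▷a) = h▷a₁ ⊗ a₂ + a₁ ⊗ h▷a₂`
    (hδr : ∀ h a, δA (r h a)
        = TensorProduct.map (r h) LinearMap.id (δA a)
        + TensorProduct.map LinearMap.id (r h) (δA a))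
    -- `δ_H(h◁a) = h₁ ⊗ h₂◁a + h₁◁a ⊗ h₂`
    (hδl : ∀ h a, δH (l h a)
        = TensorProduct.map LinearMap.id (l.flip a) (δH h)
        + TensorProduct.map (l.flip a) LinearMap.id (δH h))
    -- `θ(a,b₁) ⊗ b₂ + θ(a₁,b) ⊗ a₂ = 0` in `H ⊗ A`
    (hθδ : ∀ a b, TensorProduct.map (θ a) LinearMap.id (δA b)
        + TensorProduct.map (θ.flip b) LinearMap.id (δA a) = 0)
    -- `h₁ ⊗ σ(h₂,g) + g₁ ⊗ σ(h,g₂) = 0` in `H ⊗ A`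
    (hσδ : ∀ h g, TensorProduct.map LinearMap.id (σ.flip g) (δH h)
        + TensorProduct.map LinearMap.id (σ h) (δH g) = 0)
    -- `δ_H(θ(a,b)) = 0`
    (hδθ : ∀ a b, δH (θ a b) = 0)
    -- `δ_A(σ(h,g)) = 0`
    (hδσ : ∀ h g, δA (σ h g) = 0) :
    IsLieBialg (bbBracket brA brH r l σ θ) (bbCobracket δA δH 0 0 0 0) := by
  obtain ⟨⟨askA, jacA⟩, ⟨coA1, coA2⟩, lbA⟩ := hA
  obtain ⟨⟨askH, jacH⟩, ⟨coH1, coH2⟩, lbH⟩ := hH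
  have bap : ∀ x y : A × H, bbBracket brA brH r l σ θ x y
      = (brA x.1 y.1 + r x.2 y.1 - r y.2 x.1 + σ x.2 y.2,
         brH x.2 y.2 + l x.2 y.1 - l y.2 x.1 + θ x.1 y.1) := fun x y => rfl
  have cob : ∀ u : A × H, bbCobracket δA δH (0 : A →ₗ[k] H ⊗[k] A) (0 : H →ₗ[k] H ⊗[k] A)
        (0 : A →ₗ[k] H ⊗[k] H) (0 : H →ₗ[k] A ⊗[k] A) u
      = TensorProduct.map (LinearMap.inl k A H) (LinearMap.inl k A H) (δA u.1)
        + TensorProduct.map (LinearMap.inr k A H) (LinearMap.inr k A H) (δH u.2) := by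
    intro u; simp [bbCobracket]
  refine ⟨⟨?_, ?_⟩, ⟨?_, ?_⟩, ?_⟩
  · -- antisymmetry
    intro x y
    rw [bap, bap, Prod.ext_iff]
    constructor
    · simp only [Prod.fst_neg]
      rw [hskA x.1 y.1, hskσ x.2 y.2]
      abel
    · simp only [Prod.snd_neg]
      rw [hskH x.2 y.2, hskθ x.1 y.1]
      abel
  · -- Jacobi
    intro x y z
    obtain ⟨a, h⟩ := x
    obtain ⟨b, g⟩ := y
    obtain ⟨c, e⟩ := z
    simp only [bap, Prod.ext_iff, Prod.fst_add, Prod.snd_add, Prod.fst_zero, Prod.snd_zero,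
      map_add, map_sub, LinearMap.add_apply, LinearMap.sub_apply]
    constructor
    · -- first component
      have z1 : brA (brA a b) c + brA (brA b c) a + brA (brA c a) b = 0 := jacA a b c
      have z2 : r (θ a b) c + r (θ b c) a + r (θ c a) b = 0 := by
        rw [← hCC6 a b c]; exact jacA a b c
      have z3 : (σ (brH h g) e + σ (brH g e) h + σ (brH e h) g)
          - (r h (σ g e) + r g (σ e h) + r e (σ h g)) = 0 :=
        sub_eq_zero_of_eq (hCC1 h g e).symm
      have z4 : (r (brH h g) c + brA (σ h g) c)
          - (r h (r g c) - r g (r h c) + σ h (l g c) + σ (l h c) g) = 0 :=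
        sub_eq_zero_of_eq (hTM1 h g c)
      have z5 : (r (brH g e) a + brA (σ g e) a)
          - (r g (r e a) - r e (r g a) + σ g (l e a) + σ (l g a) e) = 0 :=
        sub_eq_zero_of_eq (hTM1 g e a)
      have z6 : (r (brH e h) b + brA (σ e h) b)
          - (r e (r h b) - r h (r e b) + σ e (l h b) + σ (l e b) h) = 0 :=
        sub_eq_zero_of_eq (hTM1 e h b)
      have z7 : (brA (r h b) c + brA b (r h c) + r (l h b) c - r (l h c) b)
          - (r h (brA b c) + σ h (θ b c)) = 0 :=
        sub_eq_zero_of_eq (hTBB1 h b c).symm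
      have z8 : (brA (r g c) a + brA c (r g a) + r (l g c) a - r (l g a) c)
          - (r g (brA c a) + σ g (θ c a)) = 0 :=
        sub_eq_zero_of_eq (hTBB1 g c a).symm
      have z9 : (brA (r e a) b + brA a (r e b) + r (l e a) b - r (l e b) a)
          - (r e (brA a b) + σ e (θ a b)) = 0 :=
        sub_eq_zero_of_eq (hTBB1 e a b).symm
      have s1 : σ h (l g c) + σ (l g c) h = 0 := by rw [hskσ h (l g c)]; abel
      have s2 : σ g (l e a) + σ (l e a) g = 0 := by rw [hskσ g (l e a)]; abel
      have s3 : σ e (l h b) + σ (l h b) e = 0 := by rw [hskσ e (l h b)]; abel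
      have t1 : σ h (θ b c) + σ (θ b c) h = 0 := by rw [hskσ h (θ b c)]; abel
      have t2 : σ g (θ c a) + σ (θ c a) g = 0 := by rw [hskσ g (θ c a)]; abel
      have t3 : σ e (θ a b) + σ (θ a b) e = 0 := by rw [hskσ e (θ a b)]; abel
      have u1 : brA b (r h c) + brA (r h c) b = 0 := by rw [hskA b (r h c)]; abel
      have u2 : brA c (r g a) + brA (r g a) c = 0 := by rw [hskA c (r g a)]; abel
      have u3 : brA a (r e b) + brA (r e b) a = 0 := by rw [hskA a (r e b)]; abel
      have sum0 : (brA (brA a b) c + brA (brA b c) a + brA (brA c a) b)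
          + (r (θ a b) c + r (θ b c) a + r (θ c a) b)
          + ((σ (brH h g) e + σ (brH g e) h + σ (brH e h) g)
              - (r h (σ g e) + r g (σ e h) + r e (σ h g)))
          + ((r (brH h g) c + brA (σ h g) c)
              - (r h (r g c) - r g (r h c) + σ h (l g c) + σ (l h c) g))
          + ((r (brH g e) a + brA (σ g e) a)
              - (r g (r e a) - r e (r g a) + σ g (l e a) + σ (l g a) e))
          + ((r (brH e h) b + brA (σ e h) b)
              - (r e (r h b) - r h (r e b) + σ e (l h b) + σ (l e b) h))
          + ((brA (r h b) c + brA b (r h c) + r (l h b) c - r (l h c) b)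
              - (r h (brA b c) + σ h (θ b c)))
          + ((brA (r g c) a + brA c (r g a) + r (l g c) a - r (l g a) c)
              - (r g (brA c a) + σ g (θ c a)))
          + ((brA (r e a) b + brA a (r e b) + r (l e a) b - r (l e b) a)
              - (r e (brA a b) + σ e (θ a b)))
          + (σ h (l g c) + σ (l g c) h) + (σ g (l e a) + σ (l e a) g)
          + (σ e (l h b) + σ (l h b) e)
          + (σ h (θ b c) + σ (θ b c) h) + (σ g (θ c a) + σ (θ c a) g)
          + (σ e (θ a b) + σ (θ a b) e)
          - (brA b (r h c) + brA (r h c) b) - (brA c (r g a) + brA (r g a) c)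
          - (brA a (r e b) + brA (r e b) a) = 0 := by
        rw [z1, z2, z3, z4, z5, z6, z7, z8, z9, s1, s2, s3, t1, t2, t3, u1, u2, u3]
        norm_num
      conv_rhs => rw [← sum0]
      abel
    · -- second component
      have w1 : brH (brH h g) e + brH (brH g e) h + brH (brH e h) g = 0 := jacH h g e
      have w2 : l h (σ g e) + l g (σ e h) + l e (σ h g) = 0 := by
        rw [← hCC5 h g e]; exact jacH h g e
      have w3 : (l (θ a b) c + l (θ b c) a + l (θ c a) b)
          - (θ a (brA b c) + θ b (brA c a) + θ c (brA a b)) = 0 :=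
        sub_eq_zero_of_eq (hCC2 a b c)
      have w4 : (l (brH h g) c + θ (σ h g) c)
          - (brH h (l g c) + brH (l h c) g + l h (r g c) - l g (r h c)) = 0 :=
        sub_eq_zero_of_eq (hTBB2 h g c)
      have w5 : (l (brH g e) a + θ (σ g e) a)
          - (brH g (l e a) + brH (l g a) e + l g (r e a) - l e (r g a)) = 0 :=
        sub_eq_zero_of_eq (hTBB2 g e a)
      have w6 : (l (brH e h) b + θ (σ e h) b)
          - (brH e (l h b) + brH (l e b) h + l e (r h b) - l h (r e b)) = 0 :=
        sub_eq_zero_of_eq (hTBB2 e h b)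
      have w7 : (l (l e a) b - l (l e b) a + θ (r e a) b + θ a (r e b))
          - (l e (brA a b) + brH e (θ a b)) = 0 :=
        sub_eq_zero_of_eq (hTM2 e a b).symm
      have w8 : (l (l h b) c - l (l h c) b + θ (r h b) c + θ b (r h c))
          - (l h (brA b c) + brH h (θ b c)) = 0 :=
        sub_eq_zero_of_eq (hTM2 h b c).symm
      have w9 : (l (l g c) a - l (l g a) c + θ (r g c) a + θ c (r g a))
          - (l g (brA c a) + brH g (θ c a)) = 0 :=
        sub_eq_zero_of_eq (hTM2 g c a).symm
      have p1 : brH h (l g c) + brH (l g c) h = 0 := by rw [hskH h (l g c)]; abel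
      have p2 : brH g (l e a) + brH (l e a) g = 0 := by rw [hskH g (l e a)]; abel
      have p3 : brH e (l h b) + brH (l h b) e = 0 := by rw [hskH e (l h b)]; abel
      have v1 : θ (brA a b) c + θ c (brA a b) = 0 := by rw [hskθ (brA a b) c]; abel
      have v2 : θ (brA b c) a + θ a (brA b c) = 0 := by rw [hskθ (brA b c) a]; abel
      have v3 : θ (brA c a) b + θ b (brA c a) = 0 := by rw [hskθ (brA c a) b]; abel
      have q1 : θ a (r e b) + θ (r e b) a = 0 := by rw [hskθ a (r e b)]; abel
      have q2 : θ b (r h c) + θ (r h c) b = 0 := by rw [hskθ b (r h c)]; abel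
      have q3 : θ c (r g a) + θ (r g a) c = 0 := by rw [hskθ c (r g a)]; abel
      have r1 : brH e (θ a b) + brH (θ a b) e = 0 := by rw [hskH e (θ a b)]; abel
      have r2 : brH h (θ b c) + brH (θ b c) h = 0 := by rw [hskH h (θ b c)]; abel
      have r3 : brH g (θ c a) + brH (θ c a) g = 0 := by rw [hskH g (θ c a)]; abel
      have sum0 : (brH (brH h g) e + brH (brH g e) h + brH (brH e h) g)
          - (l h (σ g e) + l g (σ e h) + l e (σ h g))
          + ((l (θ a b) c + l (θ b c) a + l (θ c a) b)
              - (θ a (brA b c) + θ b (brA c a) + θ c (brA a b)))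
          + ((l (brH h g) c + θ (σ h g) c)
              - (brH h (l g c) + brH (l h c) g + l h (r g c) - l g (r h c)))
          + ((l (brH g e) a + θ (σ g e) a)
              - (brH g (l e a) + brH (l g a) e + l g (r e a) - l e (r g a)))
          + ((l (brH e h) b + θ (σ e h) b)
              - (brH e (l h b) + brH (l e b) h + l e (r h b) - l h (r e b)))
          + ((l (l e a) b - l (l e b) a + θ (r e a) b + θ a (r e b))
              - (l e (brA a b) + brH e (θ a b)))
          + ((l (l h b) c - l (l h c) b + θ (r h b) c + θ b (r h c))
              - (l h (brA b c) + brH h (θ b c)))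
          + ((l (l g c) a - l (l g a) c + θ (r g c) a + θ c (r g a))
              - (l g (brA c a) + brH g (θ c a)))
          + (brH h (l g c) + brH (l g c) h) + (brH g (l e a) + brH (l e a) g)
          + (brH e (l h b) + brH (l h b) e)
          + (θ (brA a b) c + θ c (brA a b)) + (θ (brA b c) a + θ a (brA b c))
          + (θ (brA c a) b + θ b (brA c a))
          - (θ a (r e b) + θ (r e b) a) - (θ b (r h c) + θ (r h c) b)
          - (θ c (r g a) + θ (r g a) c)
          + (brH e (θ a b) + brH (θ a b) e) + (brH h (θ b c) + brH (θ b c) h)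
          + (brH g (θ c a) + brH (θ c a) g) = 0 := by
        rw [w1, w2, w3, w4, w5, w6, w7, w8, w9, p1, p2, p3, v1, v2, v3, q1, q2, q3,
          r1, r2, r3]
        norm_num
      conv_rhs => rw [← sum0]
      abel
  · -- coanticommutativity
    intro x
    simp only [cob, map_add, aux_comm_map, coA1, coH1, map_neg]
    abel
  · -- coJacobi
    intro x
    simp only [cob]
    have ed9 : ∀ t : A ⊗[k] A,
        TensorProduct.map (bbCobracket δA δH 0 0 0 0) LinearMap.id
          (TensorProduct.map (LinearMap.inl k A H) (LinearMap.inl k A H) t)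
        = TensorProduct.map
            (TensorProduct.map (LinearMap.inl k A H) (LinearMap.inl k A H))
            (LinearMap.inl k A H) (TensorProduct.map δA LinearMap.id t) := by
      intro t
      induction t using TensorProduct.induction_on with
      | zero => simp
      | tmul m n => simp [cob]
      | add u v hu hv => simp only [map_add, hu, hv]
    have ed10 : ∀ t : H ⊗[k] H,
        TensorProduct.map (bbCobracket δA δH 0 0 0 0) LinearMap.id
          (TensorProduct.map (LinearMap.inr k A H) (LinearMap.inr k A H) t)
        = TensorProduct.map
            (TensorProduct.map (LinearMap.inr k A H) (LinearMap.inr k A H))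
            (LinearMap.inr k A H) (TensorProduct.map δH LinearMap.id t) := by
      intro t
      induction t using TensorProduct.induction_on with
      | zero => simp
      | tmul m n => simp [cob]
      | add u v hu hv => simp only [map_add, hu, hv]
    have zA := coA2 x.1
    have zH := coH2 x.2
    simp only [map_add, ed9, ed10, aux_xi_nat]
    generalize hsA : TensorProduct.map δA LinearMap.id (δA x.1) = sA at zA ⊢
    generalize hsH : TensorProduct.map δH LinearMap.id (δH x.2) = sH at zH ⊢
    have sum0 : TensorProduct.map
          (TensorProduct.map (LinearMap.inl k A H) (LinearMap.inl k A H))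
          (LinearMap.inl k A H) (sA + ξmap k A sA + ξmap k A (ξmap k A sA))
        + TensorProduct.map
          (TensorProduct.map (LinearMap.inr k A H) (LinearMap.inr k A H))
          (LinearMap.inr k A H) (sH + ξmap k H sH + ξmap k H (ξmap k H sH)) = 0 := by
      rw [zA, zH, map_zero, map_zero, add_zero]
    conv_rhs => rw [← sum0]
    simp only [map_add]
    abel
  · -- LB
    intro x y
    obtain ⟨a, h⟩ := x
    obtain ⟨b, g⟩ := y
    have hAA' : ∀ (h : H) (a : A), TensorProduct.map (r.flip a) LinearMap.id (δH h)
        + TensorProduct.map LinearMap.id (l h) (δA a) = 0 := by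
      intro h a
      have h0 := congrArg (TensorProduct.comm k H A) (hAA h a)
      rw [map_add, map_zero, aux_comm_map, aux_comm_map, coH1, coA1, map_neg, map_neg,
        ← neg_add] at h0
      exact neg_eq_zero.mp h0
    have hθδ' : ∀ (a b : A), TensorProduct.map LinearMap.id (θ a) (δA b)
        + TensorProduct.map LinearMap.id (θ.flip b) (δA a) = 0 := by
      intro a b
      have h0 := congrArg (TensorProduct.comm k H A) (hθδ a b)
      rw [map_add, map_zero, aux_comm_map, aux_comm_map, coA1, coA1, map_neg, map_neg,
        ← neg_add] at h0
      exact neg_eq_zero.mp h0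
    have hσδ' : ∀ (h g : H), TensorProduct.map (σ.flip g) LinearMap.id (δH h)
        + TensorProduct.map (σ h) LinearMap.id (δH g) = 0 := by
      intro h g
      have h0 := congrArg (TensorProduct.comm k H A) (hσδ h g)
      rw [map_add, map_zero, aux_comm_map, aux_comm_map, coH1, coH1, map_neg, map_neg,
        ← neg_add] at h0
      exact neg_eq_zero.mp h0
    have ed1 : ∀ t : A ⊗[k] A,
        TensorProduct.map (bbBracket brA brH r l σ θ (a, h)) LinearMap.id
          (TensorProduct.map (LinearMap.inl k A H) (LinearMap.inl k A H) t)
        = TensorProduct.map (LinearMap.inl k A H) (LinearMap.inl k A H)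
            (TensorProduct.map (brA a + r h) LinearMap.id t)
          + TensorProduct.map (LinearMap.inr k A H) (LinearMap.inl k A H)
            (TensorProduct.map (l h + θ a) LinearMap.id t) :=
      aux_decompL _ _ _ _ _ (by intro m; simp [bap, Prod.ext_iff]; try first | (constructor <;> abel) | abel)
    have ed2 : ∀ t : H ⊗[k] H,
        TensorProduct.map (bbBracket brA brH r l σ θ (a, h)) LinearMap.id
          (TensorProduct.map (LinearMap.inr k A H) (LinearMap.inr k A H) t)
        = TensorProduct.map (LinearMap.inl k A H) (LinearMap.inr k A H)
            (TensorProduct.map (σ h - r.flip a) LinearMap.id t)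
          + TensorProduct.map (LinearMap.inr k A H) (LinearMap.inr k A H)
            (TensorProduct.map (brH h - l.flip a) LinearMap.id t) :=
      aux_decompL _ _ _ _ _ (by intro m; simp [bap, Prod.ext_iff]; try first | (constructor <;> abel) | abel)
    have ed3 : ∀ t : A ⊗[k] A,
        TensorProduct.map LinearMap.id (bbBracket brA brH r l σ θ (a, h))
          (TensorProduct.map (LinearMap.inl k A H) (LinearMap.inl k A H) t)
        = TensorProduct.map (LinearMap.inl k A H) (LinearMap.inl k A H)
            (TensorProduct.map LinearMap.id (brA a + r h) t)
          + TensorProduct.map (LinearMap.inl k A H) (LinearMap.inr k A H)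
            (TensorProduct.map LinearMap.id (l h + θ a) t) :=
      aux_decompR _ _ _ _ _ (by intro m; simp [bap, Prod.ext_iff]; try first | (constructor <;> abel) | abel)
    have ed4 : ∀ t : H ⊗[k] H,
        TensorProduct.map LinearMap.id (bbBracket brA brH r l σ θ (a, h))
          (TensorProduct.map (LinearMap.inr k A H) (LinearMap.inr k A H) t)
        = TensorProduct.map (LinearMap.inr k A H) (LinearMap.inl k A H)
            (TensorProduct.map LinearMap.id (σ h - r.flip a) t)
          + TensorProduct.map (LinearMap.inr k A H) (LinearMap.inr k A H)
            (TensorProduct.map LinearMap.id (brH h - l.flip a) t) :=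
      aux_decompR _ _ _ _ _ (by intro m; simp [bap, Prod.ext_iff]; try first | (constructor <;> abel) | abel)
    have ed5 : ∀ t : A ⊗[k] A,
        TensorProduct.map LinearMap.id ((bbBracket brA brH r l σ θ).flip (b, g))
          (TensorProduct.map (LinearMap.inl k A H) (LinearMap.inl k A H) t)
        = TensorProduct.map (LinearMap.inl k A H) (LinearMap.inl k A H)
            (TensorProduct.map LinearMap.id (brA.flip b - r g) t)
          + TensorProduct.map (LinearMap.inl k A H) (LinearMap.inr k A H)
            (TensorProduct.map LinearMap.id (θ.flip b - l g) t) :=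
      aux_decompR _ _ _ _ _ (by intro m; simp [bap, Prod.ext_iff]; try first | (constructor <;> abel) | abel)
    have ed6 : ∀ t : H ⊗[k] H,
        TensorProduct.map LinearMap.id ((bbBracket brA brH r l σ θ).flip (b, g))
          (TensorProduct.map (LinearMap.inr k A H) (LinearMap.inr k A H) t)
        = TensorProduct.map (LinearMap.inr k A H) (LinearMap.inl k A H)
            (TensorProduct.map LinearMap.id (r.flip b + σ.flip g) t)
          + TensorProduct.map (LinearMap.inr k A H) (LinearMap.inr k A H)
            (TensorProduct.map LinearMap.id (brH.flip g + l.flip b) t) :=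
      aux_decompR _ _ _ _ _ (by intro m; simp [bap, Prod.ext_iff]; try first | (constructor <;> abel) | abel)
    have ed7 : ∀ t : A ⊗[k] A,
        TensorProduct.map ((bbBracket brA brH r l σ θ).flip (b, g)) LinearMap.id
          (TensorProduct.map (LinearMap.inl k A H) (LinearMap.inl k A H) t)
        = TensorProduct.map (LinearMap.inl k A H) (LinearMap.inl k A H)
            (TensorProduct.map (brA.flip b - r g) LinearMap.id t)
          + TensorProduct.map (LinearMap.inr k A H) (LinearMap.inl k A H)
            (TensorProduct.map (θ.flip b - l g) LinearMap.id t) :=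
      aux_decompL _ _ _ _ _ (by intro m; simp [bap, Prod.ext_iff]; try first | (constructor <;> abel) | abel)
    have ed8 : ∀ t : H ⊗[k] H,
        TensorProduct.map ((bbBracket brA brH r l σ θ).flip (b, g)) LinearMap.id
          (TensorProduct.map (LinearMap.inr k A H) (LinearMap.inr k A H) t)
        = TensorProduct.map (LinearMap.inl k A H) (LinearMap.inr k A H)
            (TensorProduct.map (r.flip b + σ.flip g) LinearMap.id t)
          + TensorProduct.map (LinearMap.inr k A H) (LinearMap.inr k A H)
            (TensorProduct.map (brH.flip g + l.flip b) LinearMap.id t) :=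
      aux_decompL _ _ _ _ _ (by intro m; simp [bap, Prod.ext_iff]; try first | (constructor <;> abel) | abel)
    simp only [cob, bap]
    simp only [map_add, map_sub]
    rw [hδσ h g, hδθ a b, lbA a b, hδr h b, hδr g a, lbH h g, hδl h b, hδl g a]
    simp only [map_add, map_sub, map_zero, add_zero, ed1, ed2, ed3, ed4, ed5, ed6, ed7, ed8]
    simp only [TensorProduct.map_add_left, TensorProduct.map_add_right, aux_map_sub_left,
      aux_map_sub_right, LinearMap.add_apply, LinearMap.sub_apply, map_add, map_sub]
    rw [eq_comm, ← sub_eq_zero]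
    have mu1 : TensorProduct.map (LinearMap.inr k A H) (LinearMap.inl k A H)
          (TensorProduct.map LinearMap.id (r.flip b) (δH h))
        + TensorProduct.map (LinearMap.inr k A H) (LinearMap.inl k A H)
          (TensorProduct.map (l h) LinearMap.id (δA b)) = 0 := by
      rw [← map_add, hAA h b, map_zero]
    have mu2 : TensorProduct.map (LinearMap.inr k A H) (LinearMap.inl k A H)
          (TensorProduct.map LinearMap.id (r.flip a) (δH g))
        + TensorProduct.map (LinearMap.inr k A H) (LinearMap.inl k A H)
          (TensorProduct.map (l g) LinearMap.id (δA a)) = 0 := by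
      rw [← map_add, hAA g a, map_zero]
    have mu3 : TensorProduct.map (LinearMap.inr k A H) (LinearMap.inl k A H)
          (TensorProduct.map (θ a) LinearMap.id (δA b))
        + TensorProduct.map (LinearMap.inr k A H) (LinearMap.inl k A H)
          (TensorProduct.map (θ.flip b) LinearMap.id (δA a)) = 0 := by
      rw [← map_add, hθδ a b, map_zero]
    have mu4 : TensorProduct.map (LinearMap.inr k A H) (LinearMap.inl k A H)
          (TensorProduct.map LinearMap.id (σ.flip g) (δH h))
        + TensorProduct.map (LinearMap.inr k A H) (LinearMap.inl k A H)
          (TensorProduct.map LinearMap.id (σ h) (δH g)) = 0 := by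
      rw [← map_add, hσδ h g, map_zero]
    have nu1 : TensorProduct.map (LinearMap.inl k A H) (LinearMap.inr k A H)
          (TensorProduct.map (r.flip b) LinearMap.id (δH h))
        + TensorProduct.map (LinearMap.inl k A H) (LinearMap.inr k A H)
          (TensorProduct.map LinearMap.id (l h) (δA b)) = 0 := by
      rw [← map_add, hAA' h b, map_zero]
    have nu2 : TensorProduct.map (LinearMap.inl k A H) (LinearMap.inr k A H)
          (TensorProduct.map (r.flip a) LinearMap.id (δH g))
        + TensorProduct.map (LinearMap.inl k A H) (LinearMap.inr k A H)
          (TensorProduct.map LinearMap.id (l g) (δA a)) = 0 := by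
      rw [← map_add, hAA' g a, map_zero]
    have nu3 : TensorProduct.map (LinearMap.inl k A H) (LinearMap.inr k A H)
          (TensorProduct.map LinearMap.id (θ a) (δA b))
        + TensorProduct.map (LinearMap.inl k A H) (LinearMap.inr k A H)
          (TensorProduct.map LinearMap.id (θ.flip b) (δA a)) = 0 := by
      rw [← map_add, hθδ' a b, map_zero]
    have nu4 : TensorProduct.map (LinearMap.inl k A H) (LinearMap.inr k A H)
          (TensorProduct.map (σ.flip g) LinearMap.id (δH h))
        + TensorProduct.map (LinearMap.inl k A H) (LinearMap.inr k A H)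
          (TensorProduct.map (σ h) LinearMap.id (δH g)) = 0 := by
      rw [← map_add, hσδ' h g, map_zero]
    have sum0 : (TensorProduct.map (LinearMap.inr k A H) (LinearMap.inl k A H)
          (TensorProduct.map LinearMap.id (r.flip b) (δH h))
        + TensorProduct.map (LinearMap.inr k A H) (LinearMap.inl k A H)
          (TensorProduct.map (l h) LinearMap.id (δA b)))
        - (TensorProduct.map (LinearMap.inr k A H) (LinearMap.inl k A H)
          (TensorProduct.map LinearMap.id (r.flip a) (δH g))
        + TensorProduct.map (LinearMap.inr k A H) (LinearMap.inl k A H)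
          (TensorProduct.map (l g) LinearMap.id (δA a)))
        + (TensorProduct.map (LinearMap.inr k A H) (LinearMap.inl k A H)
          (TensorProduct.map (θ a) LinearMap.id (δA b))
        + TensorProduct.map (LinearMap.inr k A H) (LinearMap.inl k A H)
          (TensorProduct.map (θ.flip b) LinearMap.id (δA a)))
        + (TensorProduct.map (LinearMap.inr k A H) (LinearMap.inl k A H)
          (TensorProduct.map LinearMap.id (σ.flip g) (δH h))
        + TensorProduct.map (LinearMap.inr k A H) (LinearMap.inl k A H)
          (TensorProduct.map LinearMap.id (σ h) (δH g)))
        + (TensorProduct.map (LinearMap.inl k A H) (LinearMap.inr k A H)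
          (TensorProduct.map (r.flip b) LinearMap.id (δH h))
        + TensorProduct.map (LinearMap.inl k A H) (LinearMap.inr k A H)
          (TensorProduct.map LinearMap.id (l h) (δA b)))
        - (TensorProduct.map (LinearMap.inl k A H) (LinearMap.inr k A H)
          (TensorProduct.map (r.flip a) LinearMap.id (δH g))
        + TensorProduct.map (LinearMap.inl k A H) (LinearMap.inr k A H)
          (TensorProduct.map LinearMap.id (l g) (δA a)))
        + (TensorProduct.map (LinearMap.inl k A H) (LinearMap.inr k A H)
          (TensorProduct.map LinearMap.id (θ a) (δA b))
        + TensorProduct.map (LinearMap.inl k A H) (LinearMap.inr k A H)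
          (TensorProduct.map LinearMap.id (θ.flip b) (δA a)))
        + (TensorProduct.map (LinearMap.inl k A H) (LinearMap.inr k A H)
          (TensorProduct.map (σ.flip g) LinearMap.id (δH h))
        + TensorProduct.map (LinearMap.inl k A H) (LinearMap.inr k A H)
          (TensorProduct.map (σ h) LinearMap.id (δH g))) = 0 := by
      rw [mu1, mu2, mu3, mu4, nu1, nu2, nu3, nu4]
      norm_num
    conv_rhs => rw [← sum0]
    abel

end
end
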